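/- arXiv:2408.08465 — 6 statements merged into one kernel-verified Lean document; each statement's English description precedes it below -/
import Mathlib

section
/- Let (X_i)_{i≥1} be a sequence of independent standard normal N(0,1) random variables and let α > 1/2, and set λ(i) = i^{-α} and r = 1/(2α − 1). Then there exist a constant B₁ > 0 and ε₀ ∈ (0,1] such that for all 0 < ε ≤ ε₀: P( (Σ_{i=1}^∞ λ(i)² X_i²)^{1/2} ≤ ε ) ≤ B₁ · ε^{r(1−α)} · exp( −(α − 1/2) · ε^{−2r} ). -/
open MeasureTheory Filter Real ProbabilityTheory
open scoped ENNReal NNReal Topology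

section Aux


lemma factorial_le_aux : ∀ n : ℕ, (Nat.factorial n : ℝ) ≤ ((n:ℝ) + 1) ^ (n + 1) * Real.exp (-(n:ℝ)) := by
  intro n
  induction n with
  | zero => simp
  | succ n ih =>
    have hpos : (0:ℝ) < (n:ℝ) + 2 := by positivity
    have hstep : Real.exp (((n:ℝ)+2)⁻¹) * ((n:ℝ) + 1) ≤ (n:ℝ) + 2 := by
      have h := Real.add_one_le_exp (-((n:ℝ)+2)⁻¹)
      have h2 : ((n:ℝ) + 1) ≤ ((n:ℝ)+2) * Real.exp (-((n:ℝ)+2)⁻¹) := by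
        have := mul_le_mul_of_nonneg_left h hpos.le
        calc ((n:ℝ) + 1) = ((n:ℝ)+2) * (-((n:ℝ)+2)⁻¹ + 1) := by field_simp; ring
          _ ≤ ((n:ℝ)+2) * Real.exp (-((n:ℝ)+2)⁻¹) := by
              apply mul_le_mul_of_nonneg_left h hpos.le
      calc Real.exp (((n:ℝ)+2)⁻¹) * ((n:ℝ) + 1)
          ≤ Real.exp (((n:ℝ)+2)⁻¹) * (((n:ℝ)+2) * Real.exp (-((n:ℝ)+2)⁻¹)) :=
            mul_le_mul_of_nonneg_left h2 (Real.exp_pos _).le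
        _ = (n:ℝ) + 2 := by rw [mul_comm ((n:ℝ)+2), ← mul_assoc, ← Real.exp_add]; simp
    have key : Real.exp 1 * ((n:ℝ) + 1) ^ (n + 2) ≤ ((n:ℝ) + 2) ^ (n + 2) := by
      have hp := pow_le_pow_left₀ (by positivity) hstep (n + 2)
      rw [mul_pow, ← Real.exp_nat_mul] at hp
      rw [show ((n:ℕ) + 2 : ℕ) * ((n:ℝ)+2)⁻¹ = 1 by push_cast; field_simp] at hp
      exact hp
    calc (Nat.factorial (n+1) : ℝ) = ((n:ℝ) + 1) * (Nat.factorial n : ℝ) := by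
          rw [Nat.factorial_succ]; push_cast; ring
      _ ≤ ((n:ℝ) + 1) * (((n:ℝ) + 1) ^ (n + 1) * Real.exp (-(n:ℝ))) := by
          apply mul_le_mul_of_nonneg_left ih (by positivity)
      _ = ((n:ℝ) + 1) ^ (n + 2) * Real.exp (-(n:ℝ)) := by rw [pow_succ ((n:ℝ)+1) (n+1)]; ring
      _ ≤ (((n:ℝ)+1) + 1) ^ (n + 2) * Real.exp (-((n:ℝ)+1)) := by
          have h3 : ((n:ℝ)+1) ^ (n+2) ≤ ((n:ℝ) + 2) ^ (n + 2) * Real.exp (-1 : ℝ) := by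
            rw [← mul_le_mul_iff_of_pos_right (Real.exp_pos 1), mul_assoc, ← Real.exp_add]
            simpa [mul_comm] using key
          calc ((n:ℝ)+1) ^ (n+2) * Real.exp (-(n:ℝ))
              ≤ ((n:ℝ) + 2) ^ (n + 2) * Real.exp (-1:ℝ) * Real.exp (-(n:ℝ)) := by
                apply mul_le_mul_of_nonneg_right h3 (Real.exp_pos _).le
            _ = (((n:ℝ)+1) + 1) ^ (n + 2) * Real.exp (-((n:ℝ)+1)) := by
                rw [mul_assoc, ← Real.exp_add]; norm_num; ring_nf
      _ = ((↑(n+1):ℝ) + 1) ^ ((n+1) + 1) * Real.exp (-(↑(n+1):ℝ)) := by push_cast; ring_nf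


lemma gauss_sq_mgf {s : ℝ} (hs : 0 ≤ s) :
    ∫ x, Real.exp (-(s * x ^ 2)) ∂(gaussianReal 0 1) = (Real.sqrt (1 + 2 * s))⁻¹ := by
  rw [gaussianReal_of_var_ne_zero _ one_ne_zero]
  have hpdf : gaussianPDF 0 1 = fun x => ((Real.toNNReal (gaussianPDFReal 0 1 x) : ℝ≥0) : ℝ≥0∞) := rfl
  rw [hpdf, integral_withDensity_eq_integral_smul
      ((measurable_gaussianPDFReal 0 1).real_toNNReal)]
  have hb : (0:ℝ) < s + 1/2 := by linarith
  have heq : ∀ x : ℝ, (Real.toNNReal (gaussianPDFReal 0 1 x) : ℝ≥0) • Real.exp (-(s * x ^ 2))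
      = (Real.sqrt (2 * π))⁻¹ * Real.exp (-(s + 1/2) * x ^ 2) := by
    intro x
    rw [NNReal.smul_def, Real.coe_toNNReal _ (gaussianPDFReal_nonneg 0 1 x)]
    unfold gaussianPDFReal
    push_cast
    rw [smul_eq_mul, mul_one, mul_assoc, ← Real.exp_add, mul_one]
    congr 1
    ring
  simp_rw [heq]
  rw [integral_const_mul, integral_gaussian]
  rw [← Real.sqrt_inv, ← Real.sqrt_mul (by positivity)]
  congr 1
  rw [eq_comm, inv_eq_iff_eq_inv, eq_comm]
  field_simp
  have hsq := Real.sqrt_pos.2 (show (0:ℝ) < 1 + s*2 by positivity)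
  simp [Real.sqrt_inv, hsq.ne']
  rw [add_comm (2*s) 1, inv_mul_cancel₀ (Real.sqrt_pos.2 (by positivity : (0:ℝ) < 1 + 2*s)).ne']


variable {Ω : Type*} [MeasurableSpace Ω] {μ : Measure Ω} [IsProbabilityMeasure μ]
  {X : ℕ → Ω → ℝ}

lemma summable_c {α : ℝ} (hα : 1 / 2 < α) :
    Summable (fun i : ℕ => ((i : ℝ) + 1) ^ (-(2 * α))) := by
  have h : Summable (fun i : ℕ => ((i : ℝ)) ^ (-(2 * α))) :=
    Real.summable_nat_rpow.2 (by linarith)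
  have h2 := (summable_nat_add_iff 1).2 h
  refine h2.congr fun i => ?_
  push_cast
  ring_nf

lemma ae_summable_aux (hXmeas : ∀ i, Measurable (X i))
    (hXgauss : ∀ i, Measure.map (X i) μ = gaussianReal 0 1)
    {α : ℝ} (hα : 1 / 2 < α) :
    ∀ᵐ ω ∂μ, Summable (fun i : ℕ => ((i : ℝ) + 1) ^ (-(2 * α)) * X i ω ^ 2) := by
  set c : ℕ → ℝ := fun i => ((i : ℝ) + 1) ^ (-(2 * α)) with hc_def
  have hc : ∀ i, 0 ≤ c i := fun i => Real.rpow_nonneg (by positivity) _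
  -- the lintegral of x^2 against the gaussian is finite
  have hint : Integrable (fun x : ℝ => gaussianPDFReal 0 1 x * x ^ 2) := by
    have h := integrable_rpow_mul_exp_neg_mul_sq (b := 1/2) (by norm_num) (s := 2) (by norm_num)
    have h2 : Integrable (fun x : ℝ => x ^ 2 * Real.exp (-(1/2) * x ^ 2)) := by
      refine h.congr (ae_of_all _ fun x => ?_)
      norm_num [show ((2:ℝ)) = ((2:ℕ):ℝ) from by norm_num, Real.rpow_natCast]
    refine (h2.const_mul ((Real.sqrt (2 * π))⁻¹)).congr (ae_of_all _ fun x => ?_)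
    unfold gaussianPDFReal
    push_cast
    ring_nf
  have hK : ∫⁻ x, ENNReal.ofReal (x ^ 2) ∂(gaussianReal 0 1) < ⊤ := by
    rw [gaussianReal_of_var_ne_zero _ one_ne_zero,
      lintegral_withDensity_eq_lintegral_mul _ (measurable_gaussianPDF 0 1)
        (measurable_id'.pow_const 2).ennreal_ofReal]
    have : ∀ x : ℝ, (gaussianPDF 0 1 * fun x => ENNReal.ofReal (x ^ 2)) x
        = ENNReal.ofReal (gaussianPDFReal 0 1 x * x ^ 2) := by
      intro x
      simp only [Pi.mul_apply, gaussianPDF]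
      rw [← ENNReal.ofReal_mul (gaussianPDFReal_nonneg 0 1 x)]
    simp_rw [this]
    rw [← ofReal_integral_eq_lintegral_ofReal hint
      (ae_of_all _ fun x => mul_nonneg (gaussianPDFReal_nonneg 0 1 x) (sq_nonneg x))]
    exact ENNReal.ofReal_lt_top
  set K : ℝ≥0∞ := ∫⁻ x, ENNReal.ofReal (x ^ 2) ∂(gaussianReal 0 1) with hK_def
  have hXK : ∀ i, ∫⁻ ω, ENNReal.ofReal (X i ω ^ 2) ∂μ = K := by
    intro i
    have hm : Measurable fun x : ℝ => ENNReal.ofReal (x ^ 2) := by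
      exact Measurable.ennreal_ofReal (by fun_prop)
    rw [hK_def, ← hXgauss i, lintegral_map hm (hXmeas i)]
  have hmeas2 : ∀ i : ℕ, Measurable fun ω => ENNReal.ofReal (c i * X i ω ^ 2) :=
    fun i => (((hXmeas i).pow_const 2).const_mul (c i)).ennreal_ofReal
  have htot : ∫⁻ ω, ∑' i, ENNReal.ofReal (c i * X i ω ^ 2) ∂μ < ⊤ := by
    rw [lintegral_tsum fun i => (hmeas2 i).aemeasurable]
    have : ∀ i : ℕ, ∫⁻ ω, ENNReal.ofReal (c i * X i ω ^ 2) ∂μ = ENNReal.ofReal (c i) * K := by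
      intro i
      simp_rw [fun ω => ENNReal.ofReal_mul (p := c i) (q := X i ω ^ 2) (hc i)]
      rw [lintegral_const_mul _ ((hXmeas i).pow_const 2).ennreal_ofReal, hXK i]
    simp_rw [this]
    rw [ENNReal.tsum_mul_right]
    refine ENNReal.mul_lt_top ?_ hK
    rw [← ENNReal.ofReal_tsum_of_nonneg hc (summable_c hα)]
    exact ENNReal.ofReal_lt_top
  have hae : ∀ᵐ ω ∂μ, ∑' i, ENNReal.ofReal (c i * X i ω ^ 2) < ⊤ :=
    ae_lt_top (by exact Measurable.ennreal_tsum hmeas2) htot.ne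
  filter_upwards [hae] with ω hω
  have hsum := ENNReal.summable_toReal hω.ne
  refine hsum.congr fun i => ?_
  rw [ENNReal.toReal_ofReal (mul_nonneg (hc i) (sq_nonneg _))]


lemma chernoff_aux (hXmeas : ∀ i, Measurable (X i))
    (hXindep : iIndepFun X μ)
    (hXgauss : ∀ i, Measure.map (X i) μ = gaussianReal 0 1)
    {α : ℝ} (hα : 1 / 2 < α) {t : ℝ} (ht : 0 ≤ t) {ε : ℝ} (hε : 0 ≤ ε) (n : ℕ) :
    (μ {ω | Real.sqrt (∑' i : ℕ, ((i : ℝ) + 1) ^ (-(2 * α)) * X i ω ^ 2) ≤ ε}).toReal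
      ≤ Real.exp (t * ε ^ 2) *
        ∏ i ∈ Finset.range n, (Real.sqrt (1 + 2 * (t * ((i : ℝ) + 1) ^ (-(2 * α)))))⁻¹ := by
  set c : ℕ → ℝ := fun i => ((i : ℝ) + 1) ^ (-(2 * α)) with hc_def
  have hc : ∀ i, 0 ≤ c i := fun i => Real.rpow_nonneg (by positivity) _
  set f : ℕ → Ω → ℝ := fun i ω => c i * X i ω ^ 2 with hf_def
  have hfmeas : ∀ i, Measurable (f i) := fun i => ((hXmeas i).pow_const 2).const_mul (c i)
  have hfnonneg : ∀ i ω, 0 ≤ f i ω := fun i ω => mul_nonneg (hc i) (sq_nonneg _)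
  set S : Ω → ℝ := ∑ i ∈ Finset.range n, f i with hS_def
  have hSval : ∀ ω, S ω = ∑ i ∈ Finset.range n, f i ω := by
    intro ω; rw [hS_def, Finset.sum_apply]
  have hSmeas : Measurable S := by
    have h : Measurable fun ω => ∑ i ∈ Finset.range n, f i ω :=
      Finset.measurable_sum _ fun i _ => hfmeas i
    convert h using 1
    exact funext hSval
  have hSnonneg : ∀ ω, 0 ≤ S ω := fun ω => by
    rw [hSval]; exact Finset.sum_nonneg fun i _ => hfnonneg i ω
  -- step 1 : event inclusion a.e.
  have h1 : (μ {ω | Real.sqrt (∑' i : ℕ, c i * X i ω ^ 2) ≤ ε}).toReal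
      ≤ (μ {ω | S ω ≤ ε ^ 2}).toReal := by
    refine ENNReal.toReal_mono (measure_ne_top _ _) (measure_mono_ae ?_)
    filter_upwards [ae_summable_aux hXmeas hXgauss hα] with ω hω hmem
    have htsum_nonneg : 0 ≤ ∑' i, c i * X i ω ^ 2 := tsum_nonneg fun i => hfnonneg i ω
    have h2 : ∑' i, c i * X i ω ^ 2 ≤ ε ^ 2 := by
      have := Real.sq_sqrt htsum_nonneg
      calc ∑' i, c i * X i ω ^ 2 = Real.sqrt (∑' i, c i * X i ω ^ 2) ^ 2 := this.symm
        _ ≤ ε ^ 2 := by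
            apply pow_le_pow_left₀ (Real.sqrt_nonneg _) hmem
    show S ω ≤ ε ^ 2
    rw [hSval]
    exact le_trans (Summable.sum_le_tsum _ (fun i _ => hfnonneg i ω) hω) h2
  -- step 2 : Chernoff
  have h_int : Integrable (fun ω => Real.exp (-t * S ω)) μ := by
    refine Integrable.mono' (integrable_const 1) ((hSmeas.const_mul (-t)).exp.aestronglyMeasurable)
      (ae_of_all _ fun ω => ?_)
    rw [Real.norm_eq_abs, abs_of_pos (Real.exp_pos _)]
    exact Real.exp_le_one_iff.2 (mul_nonpos_of_nonpos_of_nonneg (by linarith) (hSnonneg ω))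
  have h2 := measure_le_le_exp_mul_mgf (μ := μ) (X := S) (ε ^ 2) (t := -t) (by linarith) h_int
  rw [neg_neg] at h2
  -- step 3 : mgf of sum
  have hindep' : iIndepFun f μ := by
    have := hXindep.comp (g := fun i (x : ℝ) => c i * x ^ 2)
      (fun i => (measurable_id.pow_const 2).const_mul (c i))
    exact this
  have h3 : mgf S μ (-t) = ∏ i ∈ Finset.range n, mgf (f i) μ (-t) := by
    rw [hS_def]
    exact hindep'.mgf_sum hfmeas (Finset.range n)
  -- step 4 : individual mgf
  have h4 : ∀ i : ℕ, mgf (f i) μ (-t) = (Real.sqrt (1 + 2 * (t * c i)))⁻¹ := by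
    intro i
    have hg : Measurable fun x : ℝ => Real.exp (-(t * c i * x ^ 2)) := by fun_prop
    have : mgf (f i) μ (-t) = ∫ ω, Real.exp (-(t * c i * X i ω ^ 2)) ∂μ := by
      unfold mgf
      congr 1 with ω
      rw [hf_def]
      ring_nf
    rw [this, ← integral_map (hXmeas i).aemeasurable hg.aestronglyMeasurable, hXgauss i,
      gauss_sq_mgf (mul_nonneg ht (hc i))]
  calc (μ {ω | Real.sqrt (∑' i : ℕ, c i * X i ω ^ 2) ≤ ε}).toReal
      ≤ (μ {ω | S ω ≤ ε ^ 2}).toReal := h1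
    _ ≤ Real.exp (t * ε ^ 2) * mgf S μ (-t) := h2
    _ = Real.exp (t * ε ^ 2) * ∏ i ∈ Finset.range n, (Real.sqrt (1 + 2 * (t * c i)))⁻¹ := by
        rw [h3]; congr 1; exact Finset.prod_congr rfl fun i _ => h4 i


end Aux

set_option maxHeartbeats 1000000 in
/-- **small ball upper estimate.** For iid standard normal
`(X_i)_{i≥1}`, `α > 1/2`, `λ(i) = i^{-α}`, `r = 1/(2α−1)`, there exist `B₁ > 0`
and `ε₀ ∈ (0,1]` such that for all `0 < ε ≤ ε₀`,
`P((Σ_{i≥1} λ(i)² X_i²)^{1/2} ≤ ε) ≤ B₁ ε^{r(1−α)} exp(−(α−1/2) ε^{−2r})`.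
Here `X i` for `i : ℕ` stands for the `(i+1)`-st variable, so
`λ(i+1)² = ((i:ℝ)+1)^{-2α}`. -/
theorem gaussian_small_ball_upper
    {Ω : Type*} [MeasurableSpace Ω] (μ : Measure Ω) [IsProbabilityMeasure μ]
    (X : ℕ → Ω → ℝ) (hXmeas : ∀ i, Measurable (X i))
    (hXindep : iIndepFun X μ)
    (hXgauss : ∀ i, Measure.map (X i) μ = gaussianReal 0 1)
    (α : ℝ) (hα : 1 / 2 < α) (r : ℝ) (hr : r = 1 / (2 * α - 1)) :
    ∃ B₁ > (0 : ℝ), ∃ ε₀ ∈ Set.Ioc (0 : ℝ) 1, ∀ ε : ℝ, 0 < ε → ε ≤ ε₀ →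
      (μ {ω | Real.sqrt (∑' i : ℕ, ((i : ℝ) + 1) ^ (-(2 * α)) * (X i ω) ^ 2)
          ≤ ε}).toReal
        ≤ B₁ * ε ^ (r * (1 - α)) * Real.exp (-(α - 1 / 2) * ε ^ (-(2 * r))) := by
  have hα2 : (0:ℝ) < 2 * α - 1 := by linarith
  have hrpos : 0 < r := by rw [hr]; positivity
  have hr1 : r * (2 * α - 1) = 1 := by rw [hr]; field_simp
  set β : ℝ := (1/2 : ℝ) ^ (2*α) with hβ_def
  have hβpos : 0 < β := Real.rpow_pos_of_pos (by norm_num) _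
  set κ : ℝ := Real.log (1 + β) with hκ_def
  have hκpos : 0 < κ := Real.log_pos (by linarith)
  -- eventual smallness conditions
  have hev : ∀ᶠ ε in 𝓝[>] (0:ℝ),
      (1 + 2 * ε ^ (2*r)) ^ (2*α) ≤ 1 + κ/2 ∧
      (3:ℝ)^α * ((ε ^ (-(2*r))) ^ ((1+α)/2) * Real.exp (-(κ/4) * ε ^ (-(2*r)))) ≤ 1 := by
    have h0 : Tendsto (fun ε : ℝ => ε ^ (2*r)) (𝓝[>] (0:ℝ)) (𝓝 0) := by
      have hc : ContinuousAt (fun x : ℝ => x ^ (2*r)) 0 :=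
        Real.continuousAt_rpow_const 0 (2*r) (Or.inr (by positivity))
      have h : Tendsto (fun x : ℝ => x ^ (2*r)) (𝓝[>] (0:ℝ)) (𝓝 ((0:ℝ) ^ (2*r))) :=
        hc.tendsto.mono_left nhdsWithin_le_nhds
      rwa [Real.zero_rpow (by positivity)] at h
    have h1 : Tendsto (fun ε : ℝ => (1 + 2 * ε ^ (2*r)) ^ (2*α)) (𝓝[>] (0:ℝ)) (𝓝 1) := by
      have h' : Tendsto (fun ε : ℝ => 1 + 2 * ε ^ (2*r)) (𝓝[>] (0:ℝ)) (𝓝 (1 + 2 * 0)) :=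
        tendsto_const_nhds.add (h0.const_mul 2)
      rw [mul_zero, add_zero] at h'
      have h2 := h'.rpow_const (p := 2*α) (Or.inl one_ne_zero)
      rwa [Real.one_rpow] at h2
    have hA : ∀ᶠ ε in 𝓝[>] (0:ℝ), (1 + 2 * ε ^ (2*r)) ^ (2*α) ≤ 1 + κ/2 :=
      h1.eventually_le_const (by linarith)
    have hyt : Tendsto (fun ε : ℝ => ε ^ (-(2*r))) (𝓝[>] (0:ℝ)) atTop := by
      have h0' : Tendsto (fun ε : ℝ => ε ^ (2*r)) (𝓝[>] (0:ℝ)) (𝓝[>] 0) := by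
        rw [tendsto_nhdsWithin_iff]
        exact ⟨h0, eventually_nhdsWithin_of_forall fun x hx => Real.rpow_pos_of_pos hx _⟩
      have h := tendsto_inv_nhdsGT_zero.comp h0'
      refine h.congr' ?_
      filter_upwards [self_mem_nhdsWithin] with x hx
      rw [Function.comp_apply, ← Real.rpow_neg (le_of_lt hx)]
    have htarget : Tendsto (fun z : ℝ => (3:ℝ)^α * (z ^ ((1+α)/2) * Real.exp (-(κ/4) * z)))
        atTop (𝓝 0) := by
      have h := (tendsto_rpow_mul_exp_neg_mul_atTop_nhds_zero ((1+α)/2) (κ/4)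
        (by positivity)).const_mul ((3:ℝ)^α)
      rwa [mul_zero] at h
    have hB : ∀ᶠ ε in 𝓝[>] (0:ℝ),
        (3:ℝ)^α * ((ε ^ (-(2*r))) ^ ((1+α)/2) * Real.exp (-(κ/4) * ε ^ (-(2*r)))) ≤ 1 :=
      (htarget.comp hyt).eventually_le_const one_pos
    exact hA.and hB
  obtain ⟨u, hu, hsub⟩ := mem_nhdsGT_iff_exists_Ioc_subset.1 hev
  refine ⟨1, one_pos, min u 1, ⟨lt_min hu one_pos, min_le_right u 1⟩, ?_⟩
  intro ε hε0 hεle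
  obtain ⟨hC1, hC2⟩ := hsub ⟨hε0, le_trans hεle (min_le_left u 1)⟩
  have hε1 : ε ≤ 1 := le_trans hεle (min_le_right u 1)
  set y : ℝ := ε ^ (-(2*r)) with hy_def
  have hy1 : 1 ≤ y :=
    Real.one_le_rpow_of_pos_of_le_one_of_nonpos hε0 hε1 (by nlinarith)
  have hypos : 0 < y := lt_of_lt_of_le one_pos hy1
  set N : ℕ := ⌈y⌉₊ with hN_def
  have hNy : y ≤ (N:ℝ) := Nat.le_ceil y
  have hNy2 : (N:ℝ) ≤ y + 1 := (Nat.ceil_lt_add_one hypos.le).le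
  set M : ℕ := N + 1 with hM_def
  have hMcast : (M:ℝ) = (N:ℝ) + 1 := by rw [hM_def]; push_cast; ring
  have hMpos : (0:ℝ) < (M:ℝ) := by rw [hMcast]; positivity
  have hM3y : (M:ℝ) ≤ 3 * y := by rw [hMcast]; linarith
  set t : ℝ := (M:ℝ) ^ (2*α) / 2 with ht_def
  have ht : 0 ≤ t := by rw [ht_def]; positivity
  refine le_trans (chernoff_aux hXmeas hXindep hXgauss hα ht hε0.le (2*M)) ?_
  set φ : ℕ → ℝ := fun i => (Real.sqrt (1 + 2 * (t * ((i : ℝ) + 1) ^ (-(2 * α)))))⁻¹ with hφ_def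
  have hcnn : ∀ i : ℕ, (0:ℝ) ≤ ((i : ℝ) + 1) ^ (-(2 * α)) :=
    fun i => Real.rpow_nonneg (by positivity) _
  have hargpos : ∀ i : ℕ, (0:ℝ) < 1 + 2 * (t * ((i : ℝ) + 1) ^ (-(2 * α))) := by
    intro i; have := hcnn i; nlinarith
  have hφpos : ∀ i, 0 < φ i := fun i =>
    inv_pos.2 (Real.sqrt_pos.2 (hargpos i))
  have h2t : ∀ i : ℕ, 2 * (t * ((i : ℝ) + 1) ^ (-(2 * α)))
      = (M:ℝ)^(2*α) * ((i : ℝ) + 1) ^ (-(2 * α)) := by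
    intro i; rw [ht_def]; ring
  have hsq2 : ∀ x : ℝ, 0 ≤ x → ∀ a : ℝ, x ^ (2*a) = (x ^ a) ^ 2 := by
    intro x hx a
    rw [show 2*a = a * ((2:ℕ):ℝ) by push_cast; ring, Real.rpow_mul hx, Real.rpow_natCast]
  -- block A bound
  have hA : ∀ i : ℕ, φ i ≤ ((i:ℝ)+1)^α * (((M:ℝ)^α)⁻¹) := by
    intro i
    have hj : (0:ℝ) < (i:ℝ) + 1 := by positivity
    have hx : (M:ℝ)^(2*α) * ((i : ℝ) + 1) ^ (-(2 * α))
        = ((M:ℝ)^α * ((i:ℝ)+1)^(-α)) ^ 2 := by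
      rw [hsq2 _ hMpos.le α, show -(2*α) = 2*(-α) by ring, hsq2 _ hj.le (-α), mul_pow]
    have hxpos : (0:ℝ) < (M:ℝ)^α * ((i:ℝ)+1)^(-α) :=
      mul_pos (Real.rpow_pos_of_pos hMpos α) (Real.rpow_pos_of_pos hj (-α))
    have hs : Real.sqrt ((M:ℝ)^(2*α) * ((i : ℝ) + 1) ^ (-(2 * α)))
        = (M:ℝ)^α * ((i:ℝ)+1)^(-α) := by
      rw [hx, Real.sqrt_sq hxpos.le]
    have h1 : φ i ≤ (Real.sqrt ((M:ℝ)^(2*α) * ((i : ℝ) + 1) ^ (-(2 * α))))⁻¹ := by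
      rw [hφ_def]
      have hle : (M:ℝ)^(2*α) * ((i : ℝ) + 1) ^ (-(2 * α))
          ≤ 1 + 2 * (t * ((i : ℝ) + 1) ^ (-(2 * α))) := by
        rw [h2t i]; linarith
      apply inv_anti₀
      · rw [hs]; exact hxpos
      · exact Real.sqrt_le_sqrt hle
    rw [hs, mul_inv, Real.rpow_neg hj.le, inv_inv, mul_comm] at h1
    exact h1
  -- block B bound
  have hB : ∀ i : ℕ, (i:ℝ) + 1 ≤ 2 * (M:ℝ) → φ i ≤ Real.exp (-(κ/2)) := by
    intro i hi
    have hj : (0:ℝ) < (i:ℝ) + 1 := by positivity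
    have h2Mpos : (0:ℝ) < 2 * (M:ℝ) := by linarith
    have hge : β ≤ 2 * (t * ((i : ℝ) + 1) ^ (-(2 * α))) := by
      rw [h2t i]
      have h1 : (2*(M:ℝ)) ^ (-(2*α)) ≤ ((i:ℝ)+1) ^ (-(2*α)) :=
        Real.rpow_le_rpow_of_nonpos hj hi (by linarith)
      have h2 : (M:ℝ)^(2*α) * (2*(M:ℝ)) ^ (-(2*α)) = β := by
        rw [hβ_def, Real.rpow_neg h2Mpos.le, ← div_eq_mul_inv,
          ← Real.div_rpow hMpos.le h2Mpos.le,
          show (M:ℝ) / (2*(M:ℝ)) = 1/2 by rw [eq_div_iff (by norm_num : (2:ℝ) ≠ 0)]; field_simp]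
      calc β = (M:ℝ)^(2*α) * (2*(M:ℝ)) ^ (-(2*α)) := h2.symm
        _ ≤ (M:ℝ)^(2*α) * ((i:ℝ)+1) ^ (-(2*α)) := by
            apply mul_le_mul_of_nonneg_left h1 (Real.rpow_nonneg hMpos.le _)
    have hsqβ : Real.sqrt (1 + β) = Real.exp (κ/2) := by
      have h1 : Real.exp (κ/2) ^ 2 = 1 + β := by
        rw [sq, ← Real.exp_add, show κ/2 + κ/2 = κ by ring, hκ_def,
          Real.exp_log (by linarith)]
      rw [← h1, Real.sqrt_sq (Real.exp_pos _).le]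
    show (Real.sqrt (1 + 2 * (t * (((i:ℕ):ℝ) + 1) ^ (-(2 * α)))))⁻¹ ≤ Real.exp (-(κ/2))
    rw [Real.exp_neg, ← hsqβ]
    apply inv_anti₀ (Real.sqrt_pos.2 (by linarith))
    exact Real.sqrt_le_sqrt (by linarith)
  -- product bounds
  have hP1 : ∏ i ∈ Finset.range N, φ i
      ≤ ((Nat.factorial N : ℝ))^α * (((M:ℝ)^α)⁻¹)^N := by
    calc ∏ i ∈ Finset.range N, φ i
        ≤ ∏ i ∈ Finset.range N, ((i:ℝ)+1)^α * (((M:ℝ)^α)⁻¹) :=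
          Finset.prod_le_prod (fun i _ => (hφpos i).le) (fun i _ => hA i)
      _ = (∏ i ∈ Finset.range N, ((i:ℝ)+1)^α) * (((M:ℝ)^α)⁻¹)^N := by
          rw [Finset.prod_mul_distrib, Finset.prod_const, Finset.card_range]
      _ = ((Nat.factorial N : ℝ))^α * (((M:ℝ)^α)⁻¹)^N := by
          congr 1
          rw [Real.finset_prod_rpow _ _ (fun i _ => by positivity) α]
          congr 1
          rw [← Finset.prod_range_add_one_eq_factorial]
          push_cast
          rfl
  have hP2 : ∏ k ∈ Finset.range (N+2), φ (N+k) ≤ Real.exp (-(κ/2) * (N:ℝ)) := by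
    calc ∏ k ∈ Finset.range (N+2), φ (N+k)
        ≤ ∏ k ∈ Finset.range (N+2), Real.exp (-(κ/2)) := by
          refine Finset.prod_le_prod (fun k _ => (hφpos _).le) (fun k hk => ?_)
          have hk' : k < N + 2 := Finset.mem_range.1 hk
          refine hB (N+k) ?_
          rw [hMcast]
          have hkr : (k:ℝ) ≤ (N:ℝ) + 1 := by exact_mod_cast (by omega : k ≤ N + 1)
          push_cast
          linarith
      _ = Real.exp (-(κ/2)) ^ (N+2) := by rw [Finset.prod_const, Finset.card_range]
      _ ≤ Real.exp (-(κ/2)) ^ N := by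
          apply pow_le_pow_of_le_one (Real.exp_pos _).le
            (Real.exp_le_one_iff.2 (by linarith)) (by omega)
      _ = Real.exp (-(κ/2) * (N:ℝ)) := by
          rw [← Real.exp_nat_mul]; ring_nf
  have hProd : ∏ i ∈ Finset.range (2*M), φ i
      ≤ (((Nat.factorial N : ℝ))^α * (((M:ℝ)^α)⁻¹)^N) * Real.exp (-(κ/2) * (N:ℝ)) := by
    rw [show 2*M = N + (N+2) by omega, Finset.prod_range_add]
    exact mul_le_mul hP1 hP2 (Finset.prod_nonneg fun k _ => (hφpos _).le)
      (mul_nonneg (Real.rpow_nonneg (Nat.cast_nonneg _) _) (by positivity))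
  -- factorial bound
  have hF : ((Nat.factorial N : ℝ))^α * (((M:ℝ)^α)⁻¹)^N
      ≤ (M:ℝ)^α * Real.exp (-(α * (N:ℝ))) := by
    have hfact : (Nat.factorial N : ℝ) ≤ (M:ℝ)^(M:ℕ) * Real.exp (-(N:ℝ)) := by
      have h := factorial_le_aux N
      rwa [← hMcast, ← hM_def] at h
    have h1 : ((Nat.factorial N : ℝ))^α ≤ ((M:ℝ)^(M:ℕ) * Real.exp (-(N:ℝ)))^α :=
      Real.rpow_le_rpow (Nat.cast_nonneg _) hfact (by linarith)
    have h2 : ((M:ℝ)^(M:ℕ) * Real.exp (-(N:ℝ)))^α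
        = (M:ℝ)^(((M:ℕ):ℝ) * α) * Real.exp (-(N:ℝ) * α) := by
      rw [Real.mul_rpow (by positivity) (Real.exp_pos _).le, ← Real.exp_mul,
        ← Real.rpow_natCast (M:ℝ) M, ← Real.rpow_mul hMpos.le]
    have h3 : (((M:ℝ)^α)⁻¹)^N = (M:ℝ)^(-(α * (N:ℝ))) := by
      rw [← Real.rpow_neg hMpos.le, ← Real.rpow_natCast ((M:ℝ)^(-α)) N,
        ← Real.rpow_mul hMpos.le]
      congr 1; ring
    calc ((Nat.factorial N : ℝ))^α * (((M:ℝ)^α)⁻¹)^N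
        ≤ ((M:ℝ)^(((M:ℕ):ℝ) * α) * Real.exp (-(N:ℝ) * α)) * (M:ℝ)^(-(α * (N:ℝ))) := by
          rw [← h2, h3]
          exact mul_le_mul_of_nonneg_right h1 (Real.rpow_nonneg hMpos.le _)
      _ = (M:ℝ)^α * Real.exp (-(α * (N:ℝ))) := by
          rw [mul_comm ((M:ℝ)^(((M:ℕ):ℝ) * α)) _, mul_assoc, ← Real.rpow_add hMpos]
          rw [show ((M:ℕ):ℝ) * α + (-(α * (N:ℝ))) = α by rw [hMcast]; ring]
          ring
  -- bound on t * ε^2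
  have hyε : y * ε^(2*r) = 1 := by
    rw [hy_def, ← Real.rpow_add hε0]
    norm_num
  have httot : t * ε^2 ≤ (N:ℝ)/2 + κ/4 * (N:ℝ) := by
    have hM2 : (M:ℝ) ≤ y * (1 + 2*ε^(2*r)) := by
      have h' : y * (1 + 2*ε^(2*r)) = y + 2*(y * ε^(2*r)) := by ring
      rw [h', hyε, hMcast]; linarith
    have hMr : (M:ℝ)^(2*α) ≤ y^(2*α) * (1 + 2*ε^(2*r))^(2*α) := by
      calc (M:ℝ)^(2*α) ≤ (y * (1 + 2*ε^(2*r)))^(2*α) :=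
            Real.rpow_le_rpow hMpos.le hM2 (by linarith)
        _ = y^(2*α) * (1 + 2*ε^(2*r))^(2*α) :=
            Real.mul_rpow hypos.le (by positivity)
    have hyy : y^(2*α) * ε^(2:ℕ) = y := by
      rw [hy_def, ← Real.rpow_natCast ε 2, ← Real.rpow_mul hε0.le, ← Real.rpow_add hε0]
      congr 1
      push_cast
      linear_combination (-2 : ℝ) * hr1
    have step : (M:ℝ)^(2*α) * ε^(2:ℕ) ≤ y * (1 + κ/2) := by
      calc (M:ℝ)^(2*α) * ε^(2:ℕ)
          ≤ (y^(2*α) * (1 + 2*ε^(2*r))^(2*α)) * ε^(2:ℕ) :=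
            mul_le_mul_of_nonneg_right hMr (by positivity)
        _ = (y^(2*α) * ε^(2:ℕ)) * (1 + 2*ε^(2*r))^(2*α) := by ring
        _ = y * (1 + 2*ε^(2*r))^(2*α) := by rw [hyy]
        _ ≤ y * (1 + κ/2) := mul_le_mul_of_nonneg_left hC1 hypos.le
    have hNk : y * (1 + κ/2) ≤ (N:ℝ) * (1 + κ/2) :=
      mul_le_mul_of_nonneg_right hNy (by linarith)
    rw [ht_def]
    calc (M:ℝ)^(2*α)/2 * ε^2 = ((M:ℝ)^(2*α) * ε^(2:ℕ))/2 := by ring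
      _ ≤ ((N:ℝ) * (1 + κ/2))/2 := by linarith
      _ = (N:ℝ)/2 + κ/4 * (N:ℝ) := by ring
  -- final chain
  have hMy3 : (M:ℝ)^α ≤ (3:ℝ)^α * y^α := by
    calc (M:ℝ)^α ≤ (3*y)^α := Real.rpow_le_rpow hMpos.le hM3y (by linarith)
      _ = (3:ℝ)^α * y^α := Real.mul_rpow (by norm_num) hypos.le
  have hyαsplit : y^α = y^((1+α)/2) * y^((α-1)/2) := by
    rw [← Real.rpow_add hypos]; congr 1; ring
  have hyfin : y^((α-1)/2) = ε ^ (r*(1-α)) := by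
    rw [hy_def, ← Real.rpow_mul hε0.le]
    congr 1; ring
  calc Real.exp (t * ε ^ 2) *
        ∏ i ∈ Finset.range (2*M), (Real.sqrt (1 + 2 * (t * ((i : ℝ) + 1) ^ (-(2 * α)))))⁻¹
      ≤ Real.exp (t * ε ^ 2) *
        ((((Nat.factorial N : ℝ))^α * (((M:ℝ)^α)⁻¹)^N) * Real.exp (-(κ/2) * (N:ℝ))) := by
        apply mul_le_mul_of_nonneg_left hProd (Real.exp_pos _).le
    _ ≤ Real.exp (t * ε ^ 2) *
        (((M:ℝ)^α * Real.exp (-(α * (N:ℝ)))) * Real.exp (-(κ/2) * (N:ℝ))) := by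
        apply mul_le_mul_of_nonneg_left
          (mul_le_mul_of_nonneg_right hF (Real.exp_pos _).le) (Real.exp_pos _).le
    _ = (M:ℝ)^α * Real.exp (t * ε^2 - α * (N:ℝ) - κ/2 * (N:ℝ)) := by
        have hh : Real.exp (t * ε^2 - α * (N:ℝ) - κ/2 * (N:ℝ))
            = Real.exp (t*ε^2) * (Real.exp (-(α * (N:ℝ))) * Real.exp (-(κ/2)*(N:ℝ))) := by
          rw [← Real.exp_add, ← Real.exp_add]; ring_nf
        rw [hh]; ring
    _ ≤ (M:ℝ)^α * Real.exp ((N:ℝ)/2 + κ/4 * (N:ℝ) - α * (N:ℝ) - κ/2 * (N:ℝ)) := by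
        apply mul_le_mul_of_nonneg_left (Real.exp_le_exp.2 (by linarith))
          (Real.rpow_nonneg hMpos.le _)
    _ = (M:ℝ)^α * (Real.exp (-(κ/4) * (N:ℝ)) * Real.exp (-(α - 1/2) * (N:ℝ))) := by
        rw [← Real.exp_add]; congr 1; ring
    _ ≤ ((3:ℝ)^α * y^α) * (Real.exp (-(κ/4) * y) * Real.exp (-(α - 1/2) * y)) := by
        have e1 : Real.exp (-(κ/4) * (N:ℝ)) ≤ Real.exp (-(κ/4) * y) :=
          Real.exp_le_exp.2 (by nlinarith)
        have e2 : Real.exp (-(α - 1/2) * (N:ℝ)) ≤ Real.exp (-(α - 1/2) * y) :=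
          Real.exp_le_exp.2 (by nlinarith)
        apply mul_le_mul hMy3 (mul_le_mul e1 e2 (Real.exp_pos _).le (Real.exp_pos _).le)
          (by positivity) (by positivity)
    _ ≤ 1 * ε ^ (r*(1-α)) * Real.exp (-(α - 1/2) * ε ^ (-(2*r))) := by
        rw [hyαsplit]
        have key : (3:ℝ)^α * (y^((1+α)/2) * y^((α-1)/2)) * Real.exp (-(κ/4) * y)
            ≤ y^((α-1)/2) := by
          calc (3:ℝ)^α * (y^((1+α)/2) * y^((α-1)/2)) * Real.exp (-(κ/4) * y)
              = ((3:ℝ)^α * (y^((1+α)/2) * Real.exp (-(κ/4) * y))) * y^((α-1)/2) := by ring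
            _ ≤ 1 * y^((α-1)/2) :=
                mul_le_mul_of_nonneg_right hC2 (Real.rpow_nonneg hypos.le _)
            _ = y^((α-1)/2) := one_mul _
        calc (3:ℝ)^α * (y^((1+α)/2) * y^((α-1)/2)) *
              (Real.exp (-(κ/4) * y) * Real.exp (-(α - 1/2) * y))
            = ((3:ℝ)^α * (y^((1+α)/2) * y^((α-1)/2)) * Real.exp (-(κ/4) * y)) *
              Real.exp (-(α - 1/2) * y) := by ring
          _ ≤ y^((α-1)/2) * Real.exp (-(α - 1/2) * y) :=
              mul_le_mul_of_nonneg_right key (Real.exp_pos _).le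
          _ = 1 * ε ^ (r*(1-α)) * Real.exp (-(α - 1/2) * ε ^ (-(2*r))) := by
              rw [hyfin, hy_def, one_mul]
    _ = 1 * ε ^ (r * (1 - α)) * Real.exp (-(α - 1 / 2) * ε ^ (-(2 * r))) := by norm_num
end

section
/- Let ν, λ > 0, let A be the operator on ℓ²(ℤ,ℝ) given by (Au)_i = −u_{i−1} + 2u_i − u_{i+1}, let g ∈ ℓ²(ℤ,ℝ), and let f : ℝ → ℝ be continuously differentiable with f(0) = 0, (f(x) − f(y))(x − y) ≥ 0 for all x,y ∈ ℝ, and |f(x)| ≤ C_f |x|(1 + x^{2p}) for all x ∈ ℝ for some constant C_f > 0 and positive integer p. Let T > 0, let w : [0,T] → ℓ²(ℤ,ℝ) be continuous, and let v : [0,T] → ℓ²(ℤ,ℝ) be a continuously differentiable solution of v′(t) = −νAv(t) − λv(t) − f̃(v(t) + w(t)) + g − νAw(t) − λw(t), where f̃ is the Nemytskii operator of f. Then there exists a constant C₀ > 0, depending only on ν, λ, C_f, p and the operator norm of A, such that for all t ∈ [0,T]: ‖v(t)‖² ≤ ‖v(0)‖² + C₀ ∫₀ᵗ ( ‖w(s)‖²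 + ‖w(s)‖^{4p+2} + ‖g‖² ) ds. -/
noncomputable section

open Set intervalIntegral

/-- The real Hilbert space `ℓ²(ℤ, ℝ)` of square-summable sequences indexed by `ℤ`. -/
abbrev l2Z : Type := lp (fun _ : ℤ => ℝ) 2

local notation "⟪" x ", " y "⟫" => @inner ℝ _ _ x y

lemma l2Z_inner_eq_tsum (u v : l2Z) : ⟪u, v⟫ = ∑' i : ℤ, u i * v i := by
  rw [lp.inner_eq_tsum]; simp [RCLike.inner_apply]; exact tsum_congr fun i => mul_comm _ _

lemma l2Z_summable_mul (u v : l2Z) : Summable (fun i : ℤ => u i * v i) := by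
  have h := lp.summable_inner (𝕜 := ℝ) u v
  simpa [RCLike.inner_apply, mul_comm] using h

lemma l2Z_norm_sq_eq (u : l2Z) : ∑' i : ℤ, u i * u i = ‖u‖ ^ 2 := by
  rw [← l2Z_inner_eq_tsum]; exact real_inner_self_eq_norm_sq u

lemma abs_mul_le_half (a b : ℝ) : |a * b| ≤ (a * a + b * b) / 2 := by
  rw [abs_mul]; nlinarith [sq_nonneg (|a| - |b|), sq_abs a, sq_abs b]

lemma young2 {c : ℝ} (hc : 0 < c) (a b : ℝ) :
    a * b ≤ c / 2 * a ^ 2 + 1 / (2 * c) * b ^ 2 := by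
  rw [← sub_nonneg]
  have h : c / 2 * a ^ 2 + 1 / (2 * c) * b ^ 2 - a * b = (c * a - b) ^ 2 / (2 * c) := by
    field_simp; ring
  rw [h]; positivity

lemma young6 {c : ℝ} (hc : 0 < c) (a b : ℝ) :
    a * b ≤ c / 6 * a ^ 2 + 3 / (2 * c) * b ^ 2 := by
  rw [← sub_nonneg]
  have h : c / 6 * a ^ 2 + 3 / (2 * c) * b ^ 2 - a * b = (c * a - 3 * b) ^ 2 / (6 * c) := by
    field_simp; ring
  rw [h]; positivity

lemma hid5_aux {c : ℝ} (hc : 0 < c) (x y z : ℝ) :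
    3 / (2 * c) * (x * (y * z)) ^ 2 = 3 / 2 * (x ^ 2 * y ^ 2 / c) * z ^ 2 := by
  field_simp

lemma hid6_aux {c : ℝ} (hc : 0 < c) (z : ℝ) :
    3 / (2 * c) * (c * z) ^ 2 = 3 * c / 2 * z ^ 2 := by
  field_simp

lemma mul_out2 {c : ℝ} (hc : c ≠ 0) (d x y : ℝ) :
    (c / 2 * x + d / c * y) * c = c ^ 2 / 2 * x + d * y := by
  field_simp

lemma mul_out6 {c : ℝ} (hc : c ≠ 0) (x y : ℝ) :
    (c / 6 * x + 3 / (2 * c) * y) * c = c ^ 2 / 6 * x + 3 / 2 * y := by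
  field_simp

lemma A_inner_nonneg (A : l2Z →L[ℝ] l2Z)
    (hA : ∀ (u : l2Z) (i : ℤ), A u i = -u (i - 1) + 2 * u i - u (i + 1))
    (u : l2Z) : 0 ≤ ⟪u, A u⟫ := by
  have hs : Summable (fun i : ℤ => u i * u i) := l2Z_summable_mul u u
  have hplus : Summable (fun i : ℤ => u (i + 1) * u (i + 1)) := by
    simpa [Function.comp_def] using ((Equiv.addRight (1 : ℤ)).summable_iff
      (f := fun i : ℤ => u i * u i)).2 hs
  have hminus : Summable (fun i : ℤ => u (i - 1) * u (i - 1)) := by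
    simpa [Function.comp_def, Equiv.subRight_apply] using ((Equiv.subRight (1 : ℤ)).summable_iff
      (f := fun i : ℤ => u i * u i)).2 hs
  have hmp : Summable (fun i : ℤ => u i * u (i + 1)) := by
    refine Summable.of_norm_bounded ((hs.add hplus).div_const 2) fun i => ?_
    have h := abs_mul_le_half (u i) (u (i + 1))
    rw [abs_mul] at h; simpa using h
  have hmm : Summable (fun i : ℤ => u i * u (i - 1)) := by
    refine Summable.of_norm_bounded ((hs.add hminus).div_const 2) fun i => ?_
    have h := abs_mul_le_half (u i) (u (i - 1))
    rw [abs_mul] at h; simpa using h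
  have hre : ∑' i : ℤ, u i * u (i - 1) = ∑' i : ℤ, u i * u (i + 1) := by
    have h := (Equiv.subRight (1 : ℤ)).tsum_eq (f := fun i : ℤ => u (i + 1) * u i)
    simp only [Equiv.subRight_apply, sub_add_cancel] at h
    rw [h]
    exact tsum_congr fun i => mul_comm _ _
  have hexp : ⟪u, A u⟫ =
      2 * (∑' i : ℤ, u i * u i) - 2 * (∑' i : ℤ, u i * u (i + 1)) := by
    rw [l2Z_inner_eq_tsum]
    have hfun : ∀ i : ℤ, u i * A u i
        = 2 * (u i * u i) - u i * u (i - 1) - u i * u (i + 1) := by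
      intro i; rw [hA]; ring
    rw [tsum_congr hfun, Summable.tsum_sub (((hs.mul_left 2)).sub hmm) hmp,
      Summable.tsum_sub (hs.mul_left 2) hmm, tsum_mul_left, hre]
    ring
  have hplus_eq : ∑' i : ℤ, u (i + 1) * u (i + 1) = ∑' i : ℤ, u i * u i := by
    simpa using (Equiv.addRight (1 : ℤ)).tsum_eq (f := fun i : ℤ => u i * u i)
  have hc : ∑' i : ℤ, u i * u (i + 1) ≤ ∑' i : ℤ, u i * u i := by
    calc ∑' i : ℤ, u i * u (i + 1)
        ≤ ∑' i : ℤ, (u i * u i + u (i + 1) * u (i + 1)) / 2 := by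
          refine Summable.tsum_le_tsum (fun i => ?_) hmp ((hs.add hplus).div_const 2)
          nlinarith [sq_nonneg (u i - u (i + 1))]
      _ = ((∑' i : ℤ, u i * u i) + ∑' i : ℤ, u (i + 1) * u (i + 1)) / 2 := by
          rw [tsum_div_const, Summable.tsum_add hs hplus]
      _ = ∑' i : ℤ, u i * u i := by rw [hplus_eq]; ring
  linarith

lemma nonlin_est (lam Cf : ℝ) (hlam : 0 < lam) (hCf : 0 < Cf) (p : ℕ)
    (f : ℝ → ℝ)
    (hmono : ∀ x y : ℝ, 0 ≤ (f x - f y) * (x - y))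
    (hgrowth : ∀ x : ℝ, |f x| ≤ Cf * |x| * (1 + x ^ (2 * p)))
    (F : l2Z → l2Z) (hF : ∀ (u : l2Z) (i : ℤ), F u i = f (u i))
    (v w : l2Z) :
    -⟪v, F (v + w)⟫ ≤ lam / 2 * ‖v‖ ^ 2
      + Cf ^ 2 / lam * (‖w‖ ^ 2 + ‖w‖ ^ (4 * p + 2)) := by
  have hwb : ∀ i : ℤ, |w i| ≤ ‖w‖ := by
    intro i
    simpa [Real.norm_eq_abs] using
      lp.norm_apply_le_norm (by norm_num : (2 : ENNReal) ≠ 0) w i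
  obtain ⟨M, hMdef⟩ : ∃ M : ℝ, ‖w‖ = M := ⟨_, rfl⟩
  rw [hMdef]
  rw [hMdef] at hwb
  have hM : 0 ≤ M := hMdef ▸ norm_nonneg w
  have hfw : ∀ i : ℤ, (f (w i)) ^ 2 ≤ Cf ^ 2 * (1 + M ^ (2 * p)) ^ 2 * (w i * w i) := by
    intro i
    have h2 : (w i) ^ (2 * p) ≤ M ^ (2 * p) := by
      rw [← Even.pow_abs (even_two_mul p)]
      exact pow_le_pow_left₀ (abs_nonneg _) (hwb i) _
    have h3 : |f (w i)| ≤ Cf * |w i| * (1 + M ^ (2 * p)) := by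
      refine (hgrowth (w i)).trans ?_
      exact mul_le_mul_of_nonneg_left (by linarith) (by positivity)
    calc (f (w i)) ^ 2 = |f (w i)| ^ 2 := (sq_abs _).symm
      _ ≤ (Cf * |w i| * (1 + M ^ (2 * p))) ^ 2 :=
          pow_le_pow_left₀ (abs_nonneg _) h3 2
      _ = Cf ^ 2 * (1 + M ^ (2 * p)) ^ 2 * (|w i| * |w i|) := by ring
      _ = Cf ^ 2 * (1 + M ^ (2 * p)) ^ 2 * (w i * w i) := by
          rw [abs_mul_abs_self]
  obtain ⟨K, hKdef⟩ : ∃ K : ℝ, Cf ^ 2 * (1 + M ^ (2 * p)) ^ 2 = K := ⟨_, rfl⟩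
  rw [hKdef] at hfw
  have hsv : Summable (fun i : ℤ => v i * v i) := l2Z_summable_mul v v
  have hsw : Summable (fun i : ℤ => w i * w i) := l2Z_summable_mul w w
  have hsf : Summable (fun i : ℤ => (f (w i)) ^ 2) :=
    (hsw.mul_left K).of_nonneg_of_le (fun i => sq_nonneg _) hfw
  have hinner : ⟪v, F (v + w)⟫ = ∑' i : ℤ, v i * f (v i + w i) := by
    rw [l2Z_inner_eq_tsum]
    exact tsum_congr fun i => by rw [hF]; simp
  have hsum_main : Summable (fun i : ℤ => v i * f (v i + w i)) := by
    have h := l2Z_summable_mul v (F (v + w))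
    have he : ∀ i : ℤ, v i * (F (v + w)) i = v i * f (v i + w i) := by
      intro i; rw [hF]; simp
    simpa [he] using h
  have hpt : ∀ i : ℤ, -(v i * f (v i + w i))
      ≤ lam / 2 * (v i * v i) + 1 / (2 * lam) * (f (w i)) ^ 2 := by
    intro i
    have hm : 0 ≤ (f (v i + w i) - f (w i)) * (v i) := by
      simpa using hmono (v i + w i) (w i)
    have h1 : -(v i * f (w i)) ≤ |v i| * |f (w i)| := by
      rw [← abs_mul]; exact neg_le_abs _
    have h2 : |v i| ^ 2 = v i * v i := by rw [sq_abs]; ring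
    have h3 : |f (w i)| ^ 2 = (f (w i)) ^ 2 := sq_abs _
    have hy := young2 hlam |v i| |f (w i)|
    rw [h2, h3] at hy
    nlinarith [hm, h1, hy]
  have hRHSsum : Summable (fun i : ℤ =>
      lam / 2 * (v i * v i) + 1 / (2 * lam) * (f (w i)) ^ 2) :=
    (hsv.mul_left _).add (hsf.mul_left _)
  have hmain : -⟪v, F (v + w)⟫
      ≤ lam / 2 * ‖v‖ ^ 2 + 1 / (2 * lam) * ∑' i : ℤ, (f (w i)) ^ 2 := by
    calc -⟪v, F (v + w)⟫ = ∑' i : ℤ, -(v i * f (v i + w i)) := by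
          rw [hinner, tsum_neg]
      _ ≤ ∑' i : ℤ, (lam / 2 * (v i * v i) + 1 / (2 * lam) * (f (w i)) ^ 2) :=
          Summable.tsum_le_tsum hpt hsum_main.neg hRHSsum
      _ = lam / 2 * (∑' i : ℤ, v i * v i) + 1 / (2 * lam) * ∑' i : ℤ, (f (w i)) ^ 2 := by
          rw [Summable.tsum_add (hsv.mul_left _) (hsf.mul_left _), tsum_mul_left, tsum_mul_left]
      _ = lam / 2 * ‖v‖ ^ 2 + 1 / (2 * lam) * ∑' i : ℤ, (f (w i)) ^ 2 := by
          rw [l2Z_norm_sq_eq]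
  have hfsum : ∑' i : ℤ, (f (w i)) ^ 2 ≤ K * M ^ 2 := by
    calc ∑' i : ℤ, (f (w i)) ^ 2 ≤ ∑' i : ℤ, K * (w i * w i) :=
          Summable.tsum_le_tsum hfw hsf (hsw.mul_left K)
      _ = K * ∑' i : ℤ, w i * w i := tsum_mul_left
      _ = K * M ^ 2 := by rw [l2Z_norm_sq_eq, hMdef]
  have hKb : K * M ^ 2 ≤ 2 * Cf ^ 2 * (M ^ 2 + M ^ (4 * p + 2)) := by
    have h2 : (M ^ (2 * p)) ^ 2 * M ^ 2 = M ^ (4 * p + 2) := by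
      rw [← pow_mul, ← pow_add]
      congr 1; ring
    have h1 : (1 + M ^ (2 * p)) ^ 2 ≤ 2 * (1 + (M ^ (2 * p)) ^ 2) := by
      nlinarith [sq_nonneg (1 - M ^ (2 * p))]
    have hKM : K * M ^ 2 ≤ Cf ^ 2 * (2 * (1 + (M ^ (2 * p)) ^ 2)) * M ^ 2 := by
      rw [← hKdef]
      have := sq_nonneg M
      have := sq_nonneg Cf
      nlinarith [mul_le_mul_of_nonneg_left h1 (sq_nonneg Cf)]
    calc K * M ^ 2 ≤ Cf ^ 2 * (2 * (1 + (M ^ (2 * p)) ^ 2)) * M ^ 2 := hKM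
      _ = 2 * Cf ^ 2 * (M ^ 2 + (M ^ (2 * p)) ^ 2 * M ^ 2) := by ring
      _ = 2 * Cf ^ 2 * (M ^ 2 + M ^ (4 * p + 2)) := by rw [h2]
  have hcoef : 1 / (2 * lam) * (K * M ^ 2)
      ≤ Cf ^ 2 / lam * (M ^ 2 + M ^ (4 * p + 2)) := by
    have h := mul_le_mul_of_nonneg_left hKb (by positivity : (0:ℝ) ≤ 1 / (2 * lam))
    calc 1 / (2 * lam) * (K * M ^ 2)
        ≤ 1 / (2 * lam) * (2 * Cf ^ 2 * (M ^ 2 + M ^ (4 * p + 2))) := h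
      _ = Cf ^ 2 / lam * (M ^ 2 + M ^ (4 * p + 2)) := by
          field_simp
  have hmono2 : 1 / (2 * lam) * ∑' i : ℤ, (f (w i)) ^ 2 ≤ 1 / (2 * lam) * (K * M ^ 2) :=
    mul_le_mul_of_nonneg_left hfsum (by positivity)
  linarith

set_option maxHeartbeats 1000000 in
/-- **a priori estimate.** For the lattice system
`v′(t) = −νAv − λv − f̃(v + w) + g − νAw − λw` with `f` monotone, `f(0)=0` and of
polynomial growth, there is a constant `C₀ > 0` depending only on
`ν, λ, C_f, p, A` such that every continuously differentiable solution `v` on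
`[0,T]` satisfies
`‖v(t)‖² ≤ ‖v(0)‖² + C₀ ∫₀ᵗ (‖w‖² + ‖w‖^{4p+2} + ‖g‖²)`. -/
theorem lattice_apriori_estimate
    (ν lam : ℝ) (hν : 0 < ν) (hlam : 0 < lam)
    (A : l2Z →L[ℝ] l2Z)
    (hA : ∀ (u : l2Z) (i : ℤ), A u i = -u (i - 1) + 2 * u i - u (i + 1))
    (g : l2Z)
    (f : ℝ → ℝ) (hf : ContDiff ℝ 1 f) (hf0 : f 0 = 0)
    (hmono : ∀ x y : ℝ, 0 ≤ (f x - f y) * (x - y))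
    (Cf : ℝ) (hCf : 0 < Cf) (p : ℕ) (hp : 1 ≤ p)
    (hgrowth : ∀ x : ℝ, |f x| ≤ Cf * |x| * (1 + x ^ (2 * p)))
    (F : l2Z → l2Z) (hF : ∀ (u : l2Z) (i : ℤ), F u i = f (u i)) :
    ∃ C₀ > (0 : ℝ), ∀ T : ℝ, 0 < T →
      ∀ w : ℝ → l2Z, ContinuousOn w (Icc 0 T) →
      ∀ v v' : ℝ → l2Z, ContinuousOn v' (Icc 0 T) →
        (∀ t ∈ Icc (0 : ℝ) T, HasDerivWithinAt v (v' t) (Icc 0 T) t) →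
        (∀ t ∈ Icc (0 : ℝ) T,
          v' t = -(ν • A (v t)) - lam • v t - F (v t + w t) + g
            - ν • A (w t) - lam • w t) →
        ∀ t ∈ Icc (0 : ℝ) T,
          ‖v t‖ ^ 2 ≤ ‖v 0‖ ^ 2 +
            C₀ * ∫ s in (0 : ℝ)..t,
              (‖w s‖ ^ 2 + ‖w s‖ ^ (4 * p + 2) + ‖g‖ ^ 2) := by
  refine ⟨(2 * Cf ^ 2 + 3 + 3 * ν ^ 2 * ‖A‖ ^ 2 + 3 * lam ^ 2) / lam,
    by positivity, ?_⟩
  intro T hT w hw v v' hv' hderiv heq t ht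
  -- the key pointwise differential inequality
  have hest : ∀ s ∈ Icc (0 : ℝ) T,
      2 * ⟪v s, v' s⟫ ≤ ((2 * Cf ^ 2 + 3 + 3 * ν ^ 2 * ‖A‖ ^ 2 + 3 * lam ^ 2) / lam)
        * (‖w s‖ ^ 2 + ‖w s‖ ^ (4 * p + 2) + ‖g‖ ^ 2) := by
    intro s hs
    rw [heq s hs]
    have hexp : ⟪v s, -(ν • A (v s)) - lam • v s - F (v s + w s) + g
        - ν • A (w s) - lam • w s⟫
        = -(ν * ⟪v s, A (v s)⟫) - lam * ⟪v s, v s⟫ - ⟪v s, F (v s + w s)⟫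
          + ⟪v s, g⟫ - ν * ⟪v s, A (w s)⟫ - lam * ⟪v s, w s⟫ := by
      simp [inner_sub_right, inner_add_right, inner_neg_right, real_inner_smul_right]
    have hvv : ⟪v s, v s⟫ = ‖v s‖ ^ 2 := real_inner_self_eq_norm_sq _
    rw [hexp, hvv, div_mul_eq_mul_div, le_div_iff₀ hlam]
    have hb1' : 0 ≤ ν * ⟪v s, A (v s)⟫ * lam :=
      mul_nonneg (mul_nonneg hν.le (A_inner_nonneg A hA (v s))) hlam.le
    -- nonlinear term, multiplied by lam
    have hb2 := nonlin_est lam Cf hlam hCf p f hmono hgrowth F hF (v s) (w s)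
    have hb2' : -⟪v s, F (v s + w s)⟫ * lam
        ≤ lam ^ 2 / 2 * ‖v s‖ ^ 2 + Cf ^ 2 * (‖w s‖ ^ 2 + ‖w s‖ ^ (4 * p + 2)) := by
      have h := mul_le_mul_of_nonneg_right hb2 hlam.le
      rwa [mul_out2 hlam.ne' (Cf ^ 2)] at h
    -- forcing term, multiplied by lam
    have hvg : ⟪v s, g⟫ ≤ lam / 6 * ‖v s‖ ^ 2 + 3 / (2 * lam) * ‖g‖ ^ 2 :=
      (real_inner_le_norm _ _).trans (young6 hlam _ _)
    have hvg' : ⟪v s, g⟫ * lam ≤ lam ^ 2 / 6 * ‖v s‖ ^ 2 + 3 / 2 * ‖g‖ ^ 2 := by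
      have h := mul_le_mul_of_nonneg_right hvg hlam.le
      rwa [mul_out6 hlam.ne'] at h
    -- the `A w` term
    have h5a : -⟪v s, A (w s)⟫ ≤ ‖v s‖ * (‖A‖ * ‖w s‖) := by
      calc -⟪v s, A (w s)⟫ ≤ |⟪v s, A (w s)⟫| := neg_le_abs _
        _ ≤ ‖v s‖ * ‖A (w s)‖ := abs_real_inner_le_norm _ _
        _ ≤ ‖v s‖ * (‖A‖ * ‖w s‖) :=
            mul_le_mul_of_nonneg_left (A.le_opNorm _) (norm_nonneg _)
    have h5b : -(ν * ⟪v s, A (w s)⟫)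
        ≤ lam / 6 * ‖v s‖ ^ 2 + 3 / (2 * lam) * (ν * (‖A‖ * ‖w s‖)) ^ 2 := by
      have hmul := mul_le_mul_of_nonneg_left h5a hν.le
      have hy := young6 hlam (‖v s‖) (ν * (‖A‖ * ‖w s‖))
      linarith [hmul, hy]
    have h5b' : -(ν * ⟪v s, A (w s)⟫) * lam
        ≤ lam ^ 2 / 6 * ‖v s‖ ^ 2 + 3 / 2 * (ν ^ 2 * ‖A‖ ^ 2 * ‖w s‖ ^ 2) := by
      have h := mul_le_mul_of_nonneg_right h5b hlam.le
      rw [mul_out6 hlam.ne'] at h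
      have hsq : (ν * (‖A‖ * ‖w s‖)) ^ 2 = ν ^ 2 * ‖A‖ ^ 2 * ‖w s‖ ^ 2 := by ring
      rwa [hsq] at h
    -- the `w` term
    have h6a : -⟪v s, w s⟫ ≤ ‖v s‖ * ‖w s‖ := by
      calc -⟪v s, w s⟫ ≤ |⟪v s, w s⟫| := neg_le_abs _
        _ ≤ ‖v s‖ * ‖w s‖ := abs_real_inner_le_norm _ _
    have h6b : -(lam * ⟪v s, w s⟫)
        ≤ lam / 6 * ‖v s‖ ^ 2 + 3 / (2 * lam) * (lam * ‖w s‖) ^ 2 := by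
      have hmul := mul_le_mul_of_nonneg_left h6a hlam.le
      have hy := young6 hlam (‖v s‖) (lam * ‖w s‖)
      linarith [hmul, hy]
    have h6b' : -(lam * ⟪v s, w s⟫) * lam
        ≤ lam ^ 2 / 6 * ‖v s‖ ^ 2 + 3 / 2 * (lam ^ 2 * ‖w s‖ ^ 2) := by
      have h := mul_le_mul_of_nonneg_right h6b hlam.le
      rw [mul_out6 hlam.ne'] at h
      have hsq : (lam * ‖w s‖) ^ 2 = lam ^ 2 * ‖w s‖ ^ 2 := by ring
      rwa [hsq] at h
    have q1 : 0 ≤ 3 * ‖w s‖ ^ 2 := by positivity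
    have q2 : 0 ≤ (3 + 3 * ν ^ 2 * ‖A‖ ^ 2 + 3 * lam ^ 2) * ‖w s‖ ^ (4 * p + 2) := by
      positivity
    have q3 : 0 ≤ (2 * Cf ^ 2 + 3 * ν ^ 2 * ‖A‖ ^ 2 + 3 * lam ^ 2) * ‖g‖ ^ 2 := by
      positivity
    nlinarith [hb1', hb2', hvg', h5b', h6b', q1, q2, q3]
  obtain ⟨ht0, htT⟩ := ht
  have hsubset : Icc (0 : ℝ) t ⊆ Icc 0 T := Icc_subset_Icc le_rfl htT
  have hvcont : ContinuousOn v (Icc 0 T) := fun s hs => (hderiv s hs).continuousWithinAt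
  have hycont : ContinuousOn (fun s => ⟪v s, v s⟫) (Icc 0 T) := hvcont.inner hvcont
  have hydcont : ContinuousOn (fun s => 2 * ⟪v s, v' s⟫) (Icc 0 T) :=
    continuousOn_const.mul (hvcont.inner hv')
  have hφcont : ContinuousOn
      (fun s => ((2 * Cf ^ 2 + 3 + 3 * ν ^ 2 * ‖A‖ ^ 2 + 3 * lam ^ 2) / lam)
        * (‖w s‖ ^ 2 + ‖w s‖ ^ (4 * p + 2) + ‖g‖ ^ 2)) (Icc 0 T) := by
    apply continuousOn_const.mul
    exact ((hw.norm.pow 2).add (hw.norm.pow (4 * p + 2))).add continuousOn_const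
  have hftc : ∫ s in (0 : ℝ)..t, 2 * ⟪v s, v' s⟫ = ⟪v t, v t⟫ - ⟪v 0, v 0⟫ := by
    apply integral_eq_sub_of_hasDeriv_right_of_le ht0 (hycont.mono hsubset)
    · intro x hx
      have hxT : x ∈ Icc (0 : ℝ) T := ⟨hx.1.le, (hx.2.le.trans htT)⟩
      have hd := (hderiv x hxT).inner ℝ (hderiv x hxT)
      have hmem : Icc (0 : ℝ) T ∈ nhds x :=
        Icc_mem_nhds hx.1 (lt_of_lt_of_le hx.2 htT)
      have hd' := hd.hasDerivAt hmem
      have hval : ⟪v x, v' x⟫ + ⟪v' x, v x⟫ = 2 * ⟪v x, v' x⟫ := by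
        rw [real_inner_comm]; ring
      rw [hval] at hd'
      exact hd'.hasDerivWithinAt
    · exact (hydcont.mono hsubset).intervalIntegrable_of_Icc ht0
  have hle : ∫ s in (0 : ℝ)..t, 2 * ⟪v s, v' s⟫
      ≤ ∫ s in (0 : ℝ)..t,
        ((2 * Cf ^ 2 + 3 + 3 * ν ^ 2 * ‖A‖ ^ 2 + 3 * lam ^ 2) / lam)
          * (‖w s‖ ^ 2 + ‖w s‖ ^ (4 * p + 2) + ‖g‖ ^ 2) := by
    apply integral_mono_on ht0 ((hydcont.mono hsubset).intervalIntegrable_of_Icc ht0)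
      ((hφcont.mono hsubset).intervalIntegrable_of_Icc ht0)
    intro s hs
    exact hest s (hsubset hs)
  have hintC : ∫ s in (0 : ℝ)..t,
      ((2 * Cf ^ 2 + 3 + 3 * ν ^ 2 * ‖A‖ ^ 2 + 3 * lam ^ 2) / lam)
        * (‖w s‖ ^ 2 + ‖w s‖ ^ (4 * p + 2) + ‖g‖ ^ 2)
      = ((2 * Cf ^ 2 + 3 + 3 * ν ^ 2 * ‖A‖ ^ 2 + 3 * lam ^ 2) / lam)
        * ∫ s in (0 : ℝ)..t, (‖w s‖ ^ 2 + ‖w s‖ ^ (4 * p + 2) + ‖g‖ ^ 2) :=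
    intervalIntegral.integral_const_mul _ _
  have hn1 : ⟪v t, v t⟫ = ‖v t‖ ^ 2 := real_inner_self_eq_norm_sq _
  have hn2 : ⟪v 0, v 0⟫ = ‖v 0‖ ^ 2 := real_inner_self_eq_norm_sq _
  linarith [hftc, hle, hintC, hn1, hn2]

end
end

section
/- Let ν, λ > 0, let A be the operator on ℓ²(ℤ,ℝ) given by (Au)_i = −u_{i−1} + 2u_i − u_{i+1}, let g ∈ ℓ²(ℤ,ℝ), and let f : ℝ → ℝ be continuously differentiable with f(0) = 0, (f(x) − f(y))(x − y) ≥ 0 for all x,y ∈ ℝ, and |f(x)| ≤ C_f |x|(1 + x^{2p}) for all x ∈ ℝ for some constant C_f > 0 and positive integer p. Let T > 0, let w : [0,T] → ℓ²(ℤ,ℝ) be continuous with w(0) = 0, and let v₀ ∈ ℓ²(ℤ,ℝ). Then there exists a unique continuous function v : [0,T] → ℓ²(ℤ,ℝ) such that for all t ∈ [0,T]: v(t) = v₀ + ∫₀ᵗ ( −νAv(s) − λv(s) − f̃(v(s) + w(s)) + g − νAw(s) − λw(s) ) ds, where f̃ is the Nemytskii operator of f. -/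
set_option maxHeartbeats 2000000


noncomputable section

open Set intervalIntegral

open Filter Metric MeasureTheory
open scoped RealInnerProductSpace ENNReal NNReal

/-! ### Auxiliary lemmas -/

section RadTrunc
variable {E : Type*} [NormedAddCommGroup E] [NormedSpace ℝ E]

/-- Radial truncation to the closed ball of radius `r`. -/
def radTrunc (r : ℝ) (u : E) : E := min 1 (r / ‖u‖) • u

lemma radTrunc_coef_nonneg (r : ℝ) (hr : 0 ≤ r) (u : E) : 0 ≤ min 1 (r / ‖u‖) :=
  le_min zero_le_one (div_nonneg hr (norm_nonneg u))

lemma radTrunc_eq_self {r : ℝ} {u : E} (h : ‖u‖ ≤ r) : radTrunc r u = u := by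
  rcases eq_or_ne u 0 with rfl | hu
  · simp [radTrunc]
  · have h0 : 0 < ‖u‖ := norm_pos_iff.mpr hu
    have : (1 : ℝ) ≤ r / ‖u‖ := (one_le_div h0).mpr h
    rw [radTrunc, min_eq_left this, one_smul]

lemma radTrunc_norm_le {r : ℝ} (hr : 0 ≤ r) (u : E) : ‖radTrunc r u‖ ≤ r := by
  rcases eq_or_ne u 0 with rfl | hu
  · simp [radTrunc, hr]
  · have h0 : 0 < ‖u‖ := norm_pos_iff.mpr hu
    rw [radTrunc, norm_smul, Real.norm_eq_abs, abs_of_nonneg (radTrunc_coef_nonneg r hr u)]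
    calc min 1 (r / ‖u‖) * ‖u‖ ≤ (r / ‖u‖) * ‖u‖ := by
          gcongr; exact min_le_right _ _
      _ = r := div_mul_cancel₀ _ h0.ne'

lemma radTrunc_norm_le_self {r : ℝ} (hr : 0 ≤ r) (u : E) : ‖radTrunc r u‖ ≤ ‖u‖ := by
  rw [radTrunc, norm_smul, Real.norm_eq_abs, abs_of_nonneg (radTrunc_coef_nonneg r hr u)]
  calc min 1 (r / ‖u‖) * ‖u‖ ≤ 1 * ‖u‖ := by gcongr; exact min_le_left _ _
    _ = ‖u‖ := one_mul _

private lemma radTrunc_lip_aux {r : ℝ} (hr : 0 ≤ r) {u v : E} (hn : ‖v‖ ≤ ‖u‖) :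
    ‖radTrunc r u - radTrunc r v‖ ≤ 2 * ‖u - v‖ := by
  rcases eq_or_ne v 0 with rfl | hv0
  · rw [sub_zero] at *
    calc ‖radTrunc r u - radTrunc r 0‖ = ‖radTrunc r u‖ := by simp [radTrunc]
      _ ≤ ‖u‖ := radTrunc_norm_le_self hr u
      _ ≤ 2 * ‖u‖ := by nlinarith [norm_nonneg u]
  · have hv : 0 < ‖v‖ := norm_pos_iff.mpr hv0
    have hu : 0 < ‖u‖ := lt_of_lt_of_le hv hn
    set a := min 1 (r / ‖u‖) with ha
    set b := min 1 (r / ‖v‖) with hb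
    have hdiv : r / ‖u‖ ≤ r / ‖v‖ := div_le_div_of_nonneg_left hr hv hn
    have hab : a ≤ b := min_le_min le_rfl hdiv
    have ha0 : 0 ≤ a := radTrunc_coef_nonneg r hr u
    have ha1 : a ≤ 1 := min_le_left _ _
    have hb1 : b ≤ 1 := min_le_left _ _
    have key : (b - a) * ‖v‖ ≤ ‖u‖ - ‖v‖ := by
      have huv : 0 ≤ ‖u‖ - ‖v‖ := by linarith
      rcases le_or_gt (r / ‖u‖) 1 with h1 | h1
      · have hba : b - a ≤ r / ‖v‖ - r / ‖u‖ := by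
          rcases le_or_gt (r / ‖v‖) 1 with h2 | h2
          · rw [ha, hb, min_eq_right h2, min_eq_right h1]
          · rw [hb, min_eq_left h2.le, ha, min_eq_right h1]; linarith
        have step1 : (b - a) * ‖v‖ ≤ (r / ‖v‖ - r / ‖u‖) * ‖v‖ :=
          mul_le_mul_of_nonneg_right hba hv.le
        have step2 : (r / ‖v‖ - r / ‖u‖) * ‖v‖ = (r / ‖u‖) * (‖u‖ - ‖v‖) := by
          field_simp
        have step3 : (r / ‖u‖) * (‖u‖ - ‖v‖) ≤ 1 * (‖u‖ - ‖v‖) :=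
          mul_le_mul_of_nonneg_right h1 huv
        linarith
      · have h2 : (1:ℝ) < r / ‖v‖ := lt_of_lt_of_le h1 hdiv
        have haa : a = 1 := by rw [ha, min_eq_left h1.le]
        have hbb : b = 1 := by rw [hb, min_eq_left h2.le]
        rw [haa, hbb]; simp; linarith
    have hdecomp : radTrunc r u - radTrunc r v = a • (u - v) + (a - b) • v := by
      rw [radTrunc, radTrunc, ← ha, ← hb, smul_sub, sub_smul]; abel
    calc ‖radTrunc r u - radTrunc r v‖ = ‖a • (u - v) + (a - b) • v‖ := by rw [hdecomp]
      _ ≤ ‖a • (u - v)‖ + ‖(a - b) • v‖ := norm_add_le _ _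
      _ = a * ‖u - v‖ + (b - a) * ‖v‖ := by
          rw [norm_smul, norm_smul, Real.norm_eq_abs, Real.norm_eq_abs,
            abs_of_nonneg ha0, abs_of_nonpos (by linarith : a - b ≤ 0)]
          ring_nf
      _ ≤ 1 * ‖u - v‖ + (‖u‖ - ‖v‖) :=
          add_le_add (mul_le_mul_of_nonneg_right ha1 (norm_nonneg _)) key
      _ ≤ ‖u - v‖ + ‖u - v‖ := by
          have := norm_sub_norm_le u v; linarith
      _ = 2 * ‖u - v‖ := by ring

lemma radTrunc_lip {r : ℝ} (hr : 0 ≤ r) (u v : E) :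
    ‖radTrunc r u - radTrunc r v‖ ≤ 2 * ‖u - v‖ := by
  rcases le_total ‖v‖ ‖u‖ with h | h
  · exact radTrunc_lip_aux hr h
  · rw [norm_sub_rev, norm_sub_rev u v]
    exact radTrunc_lip_aux hr h

end RadTrunc

lemma l2Z_inner (x y : l2Z) : ⟪x, y⟫ = ∑' i, x i * y i := by
  rw [lp.inner_eq_tsum (𝕜 := ℝ)]
  simp [RCLike.inner_apply, starRingEnd_apply, star_trivial]
  exact tsum_congr fun i => mul_comm _ _

lemma l2Z_summable_sq (x : l2Z) : Summable (fun i => x i * x i) := by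
  have := lp.summable_inner (𝕜 := ℝ) x x
  simpa [RCLike.inner_apply, starRingEnd_apply, star_trivial, pow_two] using this

lemma l2Z_norm_sq (x : l2Z) : ‖x‖ ^ 2 = ∑' i, x i * x i := by
  rw [← real_inner_self_eq_norm_sq, l2Z_inner]

lemma l2Z_norm_le {x z : l2Z} (h : ∀ i, |x i| ≤ |z i|) : ‖x‖ ≤ ‖z‖ := by
  have hx : ‖x‖ ^ 2 ≤ ‖z‖ ^ 2 := by
    rw [l2Z_norm_sq, l2Z_norm_sq]
    refine Summable.tsum_le_tsum (fun i => ?_) (l2Z_summable_sq x) (l2Z_summable_sq z)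
    have : |x i| * |x i| ≤ |z i| * |z i| :=
      mul_le_mul (h i) (h i) (abs_nonneg _) (abs_nonneg _)
    simpa [abs_mul_abs_self] using this
  nlinarith [norm_nonneg x, norm_nonneg z]

lemma l2Z_coord_le (x : l2Z) (i : ℤ) : |x i| ≤ ‖x‖ := by
  have := lp.norm_apply_le_norm (by norm_num : (2:ℝ≥0∞) ≠ 0) x i
  simpa [Real.norm_eq_abs] using this

/-- slope frequently below any value exceeding the right derivative. -/
lemma frequently_slope_lt {h : ℝ → ℝ} {h' : ℝ} {t : ℝ}
    (H : HasDerivWithinAt h h' (Ici t) t) :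
    ∀ ρ, h' < ρ → ∃ᶠ z in nhdsWithin t (Ioi t), (z - t)⁻¹ * (h z - h t) < ρ := by
  intro ρ hρ
  have H' : HasDerivWithinAt h h' (Ioi t) t := H.mono Ioi_subset_Ici_self
  have htend := hasDerivWithinAt_iff_tendsto_slope.mp H'
  rw [show Ioi t \ {t} = Ioi t from diff_singleton_eq_self (fun ht => (lt_irrefl t ht))] at htend
  have hev : ∀ᶠ z in nhdsWithin t (Ioi t), slope h t z ∈ Iio ρ :=
    htend (Iio_mem_nhds hρ)
  refine (hev.mono (fun z hz => ?_)).frequently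
  have heq : slope h t z = (h z - h t) / (z - t) := slope_def_field h t z
  rw [div_eq_inv_mul] at heq
  rw [← heq]; exact hz

/-- A local Lipschitz constant for the Nemytskii operator on a ball of radius `ρ`. -/
lemma nemytskii_lip (f : ℝ → ℝ) (hf : ContDiff ℝ 1 f) (F : l2Z → l2Z)
    (hF : ∀ (u : l2Z) (i : ℤ), F u i = f (u i)) (ρ : ℝ) :
    ∃ M : ℝ, 0 ≤ M ∧ ∀ x y : l2Z, ‖x‖ ≤ ρ → ‖y‖ ≤ ρ → ‖F x - F y‖ ≤ M * ‖x - y‖ := by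
  obtain ⟨M₀, hM₀⟩ := (isCompact_Icc (a := -ρ) (b := ρ)).exists_bound_of_continuousOn
    ((hf.continuous_deriv le_rfl).continuousOn)
  set M : ℝ := max M₀ 0 with hM
  refine ⟨M, le_max_right _ _, fun x y hx hy => ?_⟩
  have hlip : LipschitzOnWith M.toNNReal f (Icc (-ρ) ρ) := by
    apply Convex.lipschitzOnWith_of_nnnorm_deriv_le
      (fun z _ => (hf.differentiable one_ne_zero).differentiableAt) ?_ (convex_Icc _ _)
    intro z hz
    rw [← NNReal.coe_le_coe, coe_nnnorm, Real.coe_toNNReal _ (le_max_right _ _)]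
    exact le_trans (hM₀ z hz) (le_max_left _ _)
  have key : ∀ i, |(F x - F y) i| ≤ |(M • (x - y)) i| := by
    intro i
    have hxi : x i ∈ Icc (-ρ) ρ := abs_le.mp ((l2Z_coord_le x i).trans hx)
    have hyi : y i ∈ Icc (-ρ) ρ := abs_le.mp ((l2Z_coord_le y i).trans hy)
    have hd := hlip.dist_le_mul _ hxi _ hyi
    rw [Real.dist_eq, Real.dist_eq, Real.coe_toNNReal _ (le_max_right _ _)] at hd
    have h1 : (F x - F y) i = f (x i) - f (y i) := by
      rw [lp.coeFn_sub, Pi.sub_apply, hF, hF]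
    have h2 : (M • (x - y)) i = M * (x i - y i) := by
      rw [lp.coeFn_smul, Pi.smul_apply, lp.coeFn_sub, Pi.sub_apply]; rfl
    rw [h1, h2, abs_mul, abs_of_nonneg (le_max_right M₀ 0)]
    exact hd
  calc ‖F x - F y‖ ≤ ‖M • (x - y)‖ := l2Z_norm_le key
    _ = M * ‖x - y‖ := by
        rw [norm_smul, Real.norm_eq_abs, abs_of_nonneg (le_max_right M₀ 0)]

/-- **existence and uniqueness.** For the lattice integral
equation
`v(t) = v₀ + ∫₀ᵗ (−νAv − λv − f̃(v + w) + g − νAw − λw) ds`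
with `f` monotone, `f(0) = 0` and of polynomial growth, `w` continuous with
`w(0) = 0`, there is a unique continuous solution `v : [0,T] → ℓ²(ℤ,ℝ)`. -/
theorem lattice_existence_uniqueness
    (ν lam : ℝ) (hν : 0 < ν) (hlam : 0 < lam)
    (A : l2Z →L[ℝ] l2Z)
    (hA : ∀ (u : l2Z) (i : ℤ), A u i = -u (i - 1) + 2 * u i - u (i + 1))
    (g : l2Z)
    (f : ℝ → ℝ) (hf : ContDiff ℝ 1 f) (hf0 : f 0 = 0)
    (hmono : ∀ x y : ℝ, 0 ≤ (f x - f y) * (x - y))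
    (Cf : ℝ) (hCf : 0 < Cf) (p : ℕ) (hp : 1 ≤ p)
    (hgrowth : ∀ x : ℝ, |f x| ≤ Cf * |x| * (1 + x ^ (2 * p)))
    (F : l2Z → l2Z) (hF : ∀ (u : l2Z) (i : ℤ), F u i = f (u i))
    (T : ℝ) (hT : 0 < T)
    (w : ℝ → l2Z) (hw : ContinuousOn w (Icc 0 T)) (hw0 : w 0 = 0)
    (v₀ : l2Z) :
    ∃ v : ℝ → l2Z,
      (ContinuousOn v (Icc 0 T) ∧
        ∀ t ∈ Icc (0 : ℝ) T,
          v t = v₀ + ∫ s in (0 : ℝ)..t,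
            (-(ν • A (v s)) - lam • v s - F (v s + w s) + g
              - ν • A (w s) - lam • w s)) ∧
      ∀ v₂ : ℝ → l2Z,
        (ContinuousOn v₂ (Icc 0 T) ∧
          ∀ t ∈ Icc (0 : ℝ) T,
            v₂ t = v₀ + ∫ s in (0 : ℝ)..t,
              (-(ν • A (v₂ s)) - lam • v₂ s - F (v₂ s + w s) + g
                - ν • A (w s) - lam • w s)) →
        EqOn v₂ v (Icc 0 T) := by
  classical
  -- basic constants
  obtain ⟨W₀, hW₀⟩ := isCompact_Icc.exists_bound_of_continuousOn hw
  set W : ℝ := max W₀ 0 with hWdef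
  have hW : 0 ≤ W := le_max_right _ _
  have hwW : ∀ t ∈ Icc (0:ℝ) T, ‖w t‖ ≤ W := fun t ht => (hW₀ t ht).trans (le_max_left _ _)
  -- F vanishes at 0
  have hF0 : F 0 = 0 := by
    have hn : ‖F 0‖ ≤ ‖(0 : l2Z)‖ := l2Z_norm_le (fun i => by
      rw [hF]
      simp [hf0])
    rw [norm_zero] at hn
    exact norm_le_zero_iff.mp hn
  -- monotonicity of the Nemytskii operator
  have hFmono_inner : ∀ x y : l2Z, 0 ≤ ⟪F x - F y, x - y⟫ := by
    intro x y
    rw [l2Z_inner]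
    refine tsum_nonneg (fun i => ?_)
    have h1 : (F x - F y) i = f (x i) - f (y i) := by rw [lp.coeFn_sub, Pi.sub_apply, hF, hF]
    have h2 : (x - y) i = x i - y i := by rw [lp.coeFn_sub, Pi.sub_apply]
    rw [h1, h2]; exact hmono _ _
  -- Lipschitz constant at radius W
  obtain ⟨MW, hMW0, hMWlip⟩ := nemytskii_lip f hf F hF W
  have hFW : ∀ z : l2Z, ‖z‖ ≤ W → ‖F z‖ ≤ MW * ‖z‖ := by
    intro z hz
    have := hMWlip z 0 hz (by simpa using hW)
    simpa [hF0] using this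
  set nA : ℝ := ‖A‖ with hnAdef
  have hnA : 0 ≤ nA := norm_nonneg _
  set B : ℝ := MW * W + ‖g‖ + (ν * nA + lam) * W with hBdef
  have hB0 : 0 ≤ B := by
    have h1 : 0 ≤ MW * W := mul_nonneg hMW0 hW
    have h2 : 0 ≤ (ν * nA + lam) * W :=
      mul_nonneg (by positivity) hW
    have := norm_nonneg g
    linarith
  set K : ℝ := max 1 (2*(ν*nA+lam) + 4*B) with hKdef
  have hK1 : 1 ≤ K := le_max_left _ _
  have hK0 : 0 < K := lt_of_lt_of_le one_pos hK1
  have hKc : 2*(ν*nA+lam) + 4*B ≤ K := le_max_right _ _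
  set r : ℝ := Real.sqrt ((‖v₀‖^2 + 1) * Real.exp (K*T)) with hrdef
  have hr0 : 0 ≤ r := Real.sqrt_nonneg _
  have hrpos : 0 < r := Real.sqrt_pos.mpr (by positivity)
  have hrsq : r^2 = (‖v₀‖^2+1) * Real.exp (K*T) := Real.sq_sqrt (by positivity)
  obtain ⟨M, hM0, hMlip⟩ := nemytskii_lip f hf F hF (r + W)
  have hFrW : ∀ z : l2Z, ‖z‖ ≤ r + W → ‖F z‖ ≤ M * ‖z‖ := by
    intro z hz
    have := hMlip z 0 hz (by simpa using add_nonneg hr0 hW)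
    simpa [hF0] using this
  have hFcW : LipschitzOnWith M.toNNReal F (closedBall 0 (r+W)) := by
    rw [lipschitzOnWith_iff_dist_le_mul]
    intro x hx y hy
    rw [dist_eq_norm, dist_eq_norm, Real.coe_toNNReal _ hM0]
    exact hMlip x y (mem_closedBall_zero_iff.mp hx) (mem_closedBall_zero_iff.mp hy)
  -- the truncated vector field
  obtain ⟨G, hGdef⟩ : ∃ G : ℝ → l2Z → l2Z, ∀ t u, G t u =
      -(ν • A (radTrunc r u)) - lam • radTrunc r u - F (radTrunc r u + w t) + g
        - ν • A (w t) - lam • w t :=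
    ⟨_, fun _ _ => rfl⟩
  -- Lipschitz estimate for G
  have hGlipkey : ∀ t ∈ Icc (0:ℝ) T, ∀ x y : l2Z,
      ‖G t x - G t y‖ ≤ (2*(ν*nA + lam + M)) * ‖x - y‖ := by
    intro t ht x y
    have hbx : ‖radTrunc r x + w t‖ ≤ r + W :=
      (norm_add_le _ _).trans (add_le_add (radTrunc_norm_le hr0 x) (hwW t ht))
    have hby : ‖radTrunc r y + w t‖ ≤ r + W :=
      (norm_add_le _ _).trans (add_le_add (radTrunc_norm_le hr0 y) (hwW t ht))
    have hdiff : G t x - G t y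
        = -(ν • (A (radTrunc r x) - A (radTrunc r y))) - lam • (radTrunc r x - radTrunc r y)
          - (F (radTrunc r x + w t) - F (radTrunc r y + w t)) := by
      rw [hGdef, hGdef, smul_sub, smul_sub]; abel
    have e1 : ‖A (radTrunc r x) - A (radTrunc r y)‖ ≤ nA * ‖radTrunc r x - radTrunc r y‖ := by
      rw [← map_sub]; exact A.le_opNorm _
    have e2 : ‖F (radTrunc r x + w t) - F (radTrunc r y + w t)‖
        ≤ M * ‖radTrunc r x - radTrunc r y‖ := by
      have := hMlip _ _ hbx hby
      simpa [add_sub_add_right_eq_sub] using this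
    have e3 : ‖radTrunc r x - radTrunc r y‖ ≤ 2 * ‖x - y‖ := radTrunc_lip hr0 x y
    have step : ‖G t x - G t y‖
        ≤ ν * ‖A (radTrunc r x) - A (radTrunc r y)‖ + lam * ‖radTrunc r x - radTrunc r y‖
          + M * ‖radTrunc r x - radTrunc r y‖ := by
      rw [hdiff]
      calc ‖-(ν • (A (radTrunc r x) - A (radTrunc r y))) - lam • (radTrunc r x - radTrunc r y)
              - (F (radTrunc r x + w t) - F (radTrunc r y + w t))‖
          ≤ ‖-(ν • (A (radTrunc r x) - A (radTrunc r y))) - lam • (radTrunc r x - radTrunc r y)‖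
            + ‖F (radTrunc r x + w t) - F (radTrunc r y + w t)‖ := norm_sub_le _ _
        _ ≤ (‖ν • (A (radTrunc r x) - A (radTrunc r y))‖ + ‖lam • (radTrunc r x - radTrunc r y)‖)
            + M * ‖radTrunc r x - radTrunc r y‖ := by
            refine add_le_add (le_trans (norm_sub_le _ _) ?_) e2
            rw [norm_neg]
        _ = ν * ‖A (radTrunc r x) - A (radTrunc r y)‖ + lam * ‖radTrunc r x - radTrunc r y‖
            + M * ‖radTrunc r x - radTrunc r y‖ := by
            rw [norm_smul, norm_smul, Real.norm_eq_abs, Real.norm_eq_abs,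
              abs_of_nonneg hν.le, abs_of_nonneg hlam.le]
    have hcoef : (0:ℝ) ≤ ν*nA + lam + M := by positivity
    calc ‖G t x - G t y‖
        ≤ ν * (nA * ‖radTrunc r x - radTrunc r y‖) + lam * ‖radTrunc r x - radTrunc r y‖
          + M * ‖radTrunc r x - radTrunc r y‖ := by
          refine step.trans ?_
          have := mul_le_mul_of_nonneg_left e1 hν.le
          linarith
      _ = (ν*nA + lam + M) * ‖radTrunc r x - radTrunc r y‖ := by ring
      _ ≤ (ν*nA + lam + M) * (2 * ‖x - y‖) := mul_le_mul_of_nonneg_left e3 hcoef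
      _ = (2*(ν*nA + lam + M)) * ‖x - y‖ := by ring
  -- uniform bound for G
  set C₀ : ℝ := ν*nA*r + lam*r + M*(r+W) + ‖g‖ + ν*nA*W + lam*W with hC₀def
  have hC₀0 : 0 ≤ C₀ := by
    have := norm_nonneg g
    have h1 : 0 ≤ ν*nA*r := by positivity
    have h2 : 0 ≤ lam*r := by positivity
    have h3 : 0 ≤ M*(r+W) := mul_nonneg hM0 (by positivity)
    have h4 : 0 ≤ ν*nA*W := by positivity
    have h5 : 0 ≤ lam*W := by positivity
    linarith
  have hGbd : ∀ t ∈ Icc (0:ℝ) T, ∀ u : l2Z, ‖G t u‖ ≤ C₀ := by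
    intro t ht u
    have b1 : ‖ν • A (radTrunc r u)‖ ≤ ν*nA*r := by
      rw [norm_smul, Real.norm_eq_abs, abs_of_nonneg hν.le]
      have := (A.le_opNorm (radTrunc r u)).trans
        (mul_le_mul_of_nonneg_left (radTrunc_norm_le hr0 u) hnA)
      calc ν * ‖A (radTrunc r u)‖ ≤ ν * (nA * r) := mul_le_mul_of_nonneg_left this hν.le
        _ = ν*nA*r := by ring
    have b2 : ‖lam • radTrunc r u‖ ≤ lam*r := by
      rw [norm_smul, Real.norm_eq_abs, abs_of_nonneg hlam.le]
      exact mul_le_mul_of_nonneg_left (radTrunc_norm_le hr0 u) hlam.le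
    have b3 : ‖F (radTrunc r u + w t)‖ ≤ M*(r+W) := by
      have hb : ‖radTrunc r u + w t‖ ≤ r + W :=
        (norm_add_le _ _).trans (add_le_add (radTrunc_norm_le hr0 u) (hwW t ht))
      exact (hFrW _ hb).trans (mul_le_mul_of_nonneg_left hb hM0)
    have b4 : ‖ν • A (w t)‖ ≤ ν*nA*W := by
      rw [norm_smul, Real.norm_eq_abs, abs_of_nonneg hν.le]
      have := (A.le_opNorm (w t)).trans (mul_le_mul_of_nonneg_left (hwW t ht) hnA)
      calc ν * ‖A (w t)‖ ≤ ν * (nA * W) := mul_le_mul_of_nonneg_left this hν.le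
        _ = ν*nA*W := by ring
    have b5 : ‖lam • w t‖ ≤ lam*W := by
      rw [norm_smul, Real.norm_eq_abs, abs_of_nonneg hlam.le]
      exact mul_le_mul_of_nonneg_left (hwW t ht) hlam.le
    rw [hGdef]
    calc ‖-(ν • A (radTrunc r u)) - lam • radTrunc r u - F (radTrunc r u + w t) + g
            - ν • A (w t) - lam • w t‖
        ≤ ‖-(ν • A (radTrunc r u)) - lam • radTrunc r u - F (radTrunc r u + w t) + g
            - ν • A (w t)‖ + ‖lam • w t‖ := norm_sub_le _ _
      _ ≤ (‖-(ν • A (radTrunc r u)) - lam • radTrunc r u - F (radTrunc r u + w t) + g‖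
            + ‖ν • A (w t)‖) + ‖lam • w t‖ := by
          refine add_le_add (norm_sub_le _ _) le_rfl
      _ ≤ ((‖-(ν • A (radTrunc r u)) - lam • radTrunc r u - F (radTrunc r u + w t)‖ + ‖g‖)
            + ‖ν • A (w t)‖) + ‖lam • w t‖ := by
          refine add_le_add (add_le_add (norm_add_le _ _) le_rfl) le_rfl
      _ ≤ (((‖-(ν • A (radTrunc r u)) - lam • radTrunc r u‖ + ‖F (radTrunc r u + w t)‖) + ‖g‖)
            + ‖ν • A (w t)‖) + ‖lam • w t‖ := by
          refine add_le_add (add_le_add (add_le_add (norm_sub_le _ _) le_rfl) le_rfl) le_rfl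
      _ ≤ ((((‖ν • A (radTrunc r u)‖ + ‖lam • radTrunc r u‖) + ‖F (radTrunc r u + w t)‖) + ‖g‖)
            + ‖ν • A (w t)‖) + ‖lam • w t‖ := by
          refine add_le_add (add_le_add (add_le_add (add_le_add ?_ le_rfl) le_rfl) le_rfl) le_rfl
          refine (norm_sub_le _ _).trans ?_
          rw [norm_neg]
      _ ≤ C₀ := by
          rw [hC₀def]
          linarith
  -- Picard–Lindelöf
  have hmemIci : ∀ t ∈ Ico (0:ℝ) T, Icc (0:ℝ) T ∈ nhdsWithin t (Ici t) := by
    intro t ht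
    rw [mem_nhdsWithin]
    exact ⟨Iio T, isOpen_Iio, ht.2, fun z hz => ⟨ht.1.trans hz.2, hz.1.le⟩⟩
  have hpl : IsPicardLindelof G (tmin := 0) (tmax := T) ⟨0, ⟨le_rfl, hT.le⟩⟩ v₀
      ⟨C₀*T, mul_nonneg hC₀0 hT.le⟩ 0 ⟨C₀, hC₀0⟩ (2*(ν*nA + lam + M)).toNNReal :=
    { lipschitzOnWith := by
        intro t ht
        have : LipschitzWith (2*(ν*nA + lam + M)).toNNReal (G t) := by
          apply LipschitzWith.of_dist_le_mul
          intro x y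
          rw [dist_eq_norm, dist_eq_norm, Real.coe_toNNReal _ (by positivity)]
          exact hGlipkey t ht x y
        exact this.lipschitzOnWith
      continuousOn := by
        intro x hx
        have h1 : ContinuousOn (fun t => F (radTrunc r x + w t)) (Icc 0 T) := by
          refine (hFcW.continuousOn).comp (continuousOn_const.add hw) ?_
          intro t ht
          exact mem_closedBall_zero_iff.mpr
            ((norm_add_le _ _).trans (add_le_add (radTrunc_norm_le hr0 x) (hwW t ht)))
        have h2 : ContinuousOn (fun t => ν • A (w t)) (Icc 0 T) :=
          (A.continuous.comp_continuousOn hw).const_smul ν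
        have h3 : ContinuousOn (fun t => lam • w t) (Icc 0 T) := hw.const_smul lam
        have : ContinuousOn (fun t =>
            -(ν • A (radTrunc r x)) - lam • radTrunc r x - F (radTrunc r x + w t) + g
              - ν • A (w t) - lam • w t) (Icc 0 T) :=
          ((((continuousOn_const.sub h1).add continuousOn_const).sub h2).sub h3)
        simpa only [hGdef] using this
      norm_le := fun t ht x _ => hGbd t ht x
      mul_max_le := by
        have : max (T - 0) (0 - 0) = T := by
          rw [sub_zero, sub_zero]
          exact max_eq_left hT.le
        show C₀ * max (T - 0) (0 - 0) ≤ C₀ * T - 0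
        rw [this, sub_zero] }
  obtain ⟨v, hv0', hvd⟩ := hpl.exists_eq_forall_mem_Icc_hasDerivWithinAt₀
  have hv0 : v 0 = v₀ := hv0'
  have hvc : ContinuousOn v (Icc 0 T) := fun t ht => (hvd t ht).continuousWithinAt
  have hvd' : ∀ t ∈ Ico (0:ℝ) T, HasDerivWithinAt v (G t (v t)) (Ici t) t := fun t ht =>
    (hvd t (Ico_subset_Icc_self ht)).mono_of_mem_nhdsWithin (hmemIci t ht)
  -- energy estimate
  have hnormle : ∀ t ∈ Icc (0:ℝ) T, ‖v t‖ ≤ r := by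
    have hhc : ContinuousOn (fun t => ‖v t‖^2) (Icc 0 T) := hvc.norm.pow 2
    have hhd : ∀ t ∈ Ico (0:ℝ) T,
        HasDerivWithinAt (fun t => ‖v t‖^2) (2 * ⟪G t (v t), v t⟫) (Ici t) t := by
      intro t ht
      have hinner := (hvd' t ht).inner ℝ (hvd' t ht)
      have hfun : (fun s => ⟪v s, v s⟫) = (fun s => ‖v s‖^2) :=
        funext fun s => real_inner_self_eq_norm_sq _
      rw [hfun] at hinner
      have e : 2 * ⟪G t (v t), v t⟫ = ⟪v t, G t (v t)⟫ + ⟪G t (v t), v t⟫ := by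
        rw [real_inner_comm (v t) (G t (v t))]
        ring
      rw [e]; exact hinner
    have hbound : ∀ t ∈ Ico (0:ℝ) T, 2 * ⟪G t (v t), v t⟫ ≤ K * ‖v t‖^2 + K := by
      intro t ht
      set u := v t with hu
      have htI : t ∈ Icc (0:ℝ) T := Ico_subset_Icc_self ht
      have hdecomp : G t u = (-(ν • A (radTrunc r u)) - lam • radTrunc r u)
          + (-(F (radTrunc r u + w t))) + (g - ν • A (w t) - lam • w t) := by
        rw [hGdef]; abel
      have hsplit : ⟪G t u, u⟫ = ⟪-(ν • A (radTrunc r u)) - lam • radTrunc r u, u⟫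
          + ⟪-(F (radTrunc r u + w t)), u⟫ + ⟪g - ν • A (w t) - lam • w t, u⟫ := by
        rw [hdecomp, inner_add_left, inner_add_left]
      -- X-term
      have hX : ⟪-(ν • A (radTrunc r u)) - lam • radTrunc r u, u⟫ ≤ (ν*nA + lam) * ‖u‖^2 := by
        have hXn : ‖-(ν • A (radTrunc r u)) - lam • radTrunc r u‖ ≤ (ν*nA + lam) * ‖u‖ := by
          refine (norm_sub_le _ _).trans ?_
          rw [norm_neg, norm_smul, norm_smul, Real.norm_eq_abs, Real.norm_eq_abs,
            abs_of_nonneg hν.le, abs_of_nonneg hlam.le]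
          have e1 : ‖A (radTrunc r u)‖ ≤ nA * ‖u‖ :=
            (A.le_opNorm _).trans (mul_le_mul_of_nonneg_left (radTrunc_norm_le_self hr0 u) hnA)
          have e2 : ‖radTrunc r u‖ ≤ ‖u‖ := radTrunc_norm_le_self hr0 u
          have := mul_le_mul_of_nonneg_left e1 hν.le
          have := mul_le_mul_of_nonneg_left e2 hlam.le
          nlinarith
        calc ⟪-(ν • A (radTrunc r u)) - lam • radTrunc r u, u⟫
            ≤ ‖-(ν • A (radTrunc r u)) - lam • radTrunc r u‖ * ‖u‖ := real_inner_le_norm _ _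
          _ ≤ ((ν*nA + lam) * ‖u‖) * ‖u‖ := mul_le_mul_of_nonneg_right hXn (norm_nonneg _)
          _ = (ν*nA + lam) * ‖u‖^2 := by ring
      -- Y-term (monotonicity)
      have hFwt : ‖F (w t)‖ ≤ B := by
        have h1 : ‖F (w t)‖ ≤ MW * ‖w t‖ := hFW _ (hwW t htI)
        have h2 : MW * ‖w t‖ ≤ MW * W := mul_le_mul_of_nonneg_left (hwW t htI) hMW0
        have h3 : 0 ≤ (ν * nA + lam) * W := mul_nonneg (by positivity) hW
        have := norm_nonneg g
        rw [hBdef]; linarith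
      have hY : ⟪-(F (radTrunc r u + w t)), u⟫ ≤ B * ‖u‖ := by
        rw [inner_neg_left]
        have hkey : -(‖F (w t)‖ * ‖u‖) ≤ ⟪F (radTrunc r u + w t), u⟫ := by
          rcases eq_or_ne u 0 with h0 | h0
          · rw [h0]; simp
          · have hun : 0 < ‖u‖ := norm_pos_iff.mpr h0
            set a : ℝ := min 1 (r / ‖u‖) with hadef
            have ha0 : 0 < a := lt_min one_pos (div_pos hrpos hun)
            have hπ : radTrunc r u = a • u := rfl
            have hmono1 : 0 ≤ ⟪F (radTrunc r u + w t) - F (w t), radTrunc r u⟫ := by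
              have := hFmono_inner (radTrunc r u + w t) (w t)
              rwa [add_sub_cancel_right] at this
            have hlow : -(‖F (w t)‖ * ‖radTrunc r u‖) ≤ ⟪F (w t), radTrunc r u⟫ := by
              have := abs_real_inner_le_norm (F (w t)) (radTrunc r u)
              have h2 := neg_abs_le ⟪F (w t), radTrunc r u⟫
              linarith
            have hc : ⟪F (radTrunc r u + w t), radTrunc r u⟫
                ≥ -(‖F (w t)‖ * ‖radTrunc r u‖) := by
              have : ⟪F (radTrunc r u + w t), radTrunc r u⟫
                  = ⟪F (radTrunc r u + w t) - F (w t), radTrunc r u⟫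
                    + ⟪F (w t), radTrunc r u⟫ := by
                rw [← inner_add_left]; congr 1; abel
              linarith
            have hnorma : ‖radTrunc r u‖ = a * ‖u‖ := by
              rw [hπ, norm_smul, Real.norm_eq_abs, abs_of_nonneg ha0.le]
            have hsm : ⟪F (radTrunc r u + w t), radTrunc r u⟫
                = a * ⟪F (radTrunc r u + w t), u⟫ := by
              conv_lhs => rw [hπ]
              rw [real_inner_smul_right, ← hπ]
            rw [hsm, hnorma] at hc
            have hfin : a * (-(‖F (w t)‖ * ‖u‖)) ≤ a * ⟪F (radTrunc r u + w t), u⟫ := by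
              have : -(‖F (w t)‖ * (a * ‖u‖)) = a * (-(‖F (w t)‖ * ‖u‖)) := by ring
              linarith [hc, this.symm.le]
            exact (mul_le_mul_iff_right₀ ha0).mp hfin
        have : -⟪F (radTrunc r u + w t), u⟫ ≤ ‖F (w t)‖ * ‖u‖ := by linarith
        refine this.trans (mul_le_mul_of_nonneg_right hFwt (norm_nonneg _))
      -- Z-term
      have hZ : ⟪g - ν • A (w t) - lam • w t, u⟫ ≤ B * ‖u‖ := by
        have hZn : ‖g - ν • A (w t) - lam • w t‖ ≤ B := by
          have b4 : ‖ν • A (w t)‖ ≤ ν*nA*W := by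
            rw [norm_smul, Real.norm_eq_abs, abs_of_nonneg hν.le]
            have := (A.le_opNorm (w t)).trans (mul_le_mul_of_nonneg_left (hwW t htI) hnA)
            nlinarith
          have b5 : ‖lam • w t‖ ≤ lam*W := by
            rw [norm_smul, Real.norm_eq_abs, abs_of_nonneg hlam.le]
            exact mul_le_mul_of_nonneg_left (hwW t htI) hlam.le
          have h6 : 0 ≤ MW * W := mul_nonneg hMW0 hW
          have t1 : ‖g - ν • A (w t) - lam • w t‖ ≤ ‖g - ν • A (w t)‖ + ‖lam • w t‖ :=
            norm_sub_le _ _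
          have t2 : ‖g - ν • A (w t)‖ ≤ ‖g‖ + ‖ν • A (w t)‖ := norm_sub_le _ _
          rw [hBdef]; nlinarith
        calc ⟪g - ν • A (w t) - lam • w t, u⟫
            ≤ ‖g - ν • A (w t) - lam • w t‖ * ‖u‖ := real_inner_le_norm _ _
          _ ≤ B * ‖u‖ := mul_le_mul_of_nonneg_right hZn (norm_nonneg _)
      have hu1 : ‖u‖ ≤ 1 + ‖u‖^2 := by nlinarith [sq_nonneg (‖u‖ - 1), norm_nonneg u]
      have hB2 : ⟪G t u, u⟫ ≤ (ν*nA + lam) * ‖u‖^2 + 2*B*(1 + ‖u‖^2) := by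
        rw [hsplit]
        have := mul_le_mul_of_nonneg_left hu1 hB0
        nlinarith
      have hsq : 0 ≤ ‖u‖^2 := sq_nonneg _
      nlinarith
    have hgron := le_gronwallBound_of_liminf_deriv_right_le
      (f' := fun t => 2 * ⟪G t (v t), v t⟫) hhc
      (fun x hx ρ hρ => frequently_slope_lt (hhd x hx) ρ hρ)
      (δ := ‖v₀‖^2) (by rw [hv0]) hbound
    intro t ht
    have h1 := hgron t ht
    rw [gronwallBound_of_K_ne_0 hK0.ne'] at h1
    simp only [sub_zero] at h1
    have hexp : Real.exp (K*t) ≤ Real.exp (K*T) :=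
      Real.exp_le_exp.mpr (mul_le_mul_of_nonneg_left ht.2 hK0.le)
    have h2 : ‖v t‖^2 ≤ r^2 := by
      rw [hrsq]
      have hd : K / K = 1 := div_self hK0.ne'
      rw [hd] at h1
      have h3 : ‖v₀‖^2 * Real.exp (K*t) ≤ ‖v₀‖^2 * Real.exp (K*T) :=
        mul_le_mul_of_nonneg_left hexp (sq_nonneg _)
      have h4 : (0:ℝ) < Real.exp (K*T) := Real.exp_pos _
      nlinarith
    calc ‖v t‖ = Real.sqrt (‖v t‖^2) := (Real.sqrt_sq (norm_nonneg _)).symm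
      _ ≤ Real.sqrt (r^2) := Real.sqrt_le_sqrt h2
      _ = r := Real.sqrt_sq hr0
  -- the (untruncated) integrand along v
  obtain ⟨Φ, hΦ⟩ : ∃ Φ : ℝ → l2Z, ∀ s, Φ s =
      -(ν • A (v s)) - lam • v s - F (v s + w s) + g - ν • A (w s) - lam • w s :=
    ⟨_, fun _ => rfl⟩
  have hGΦ : ∀ s ∈ Icc (0:ℝ) T, G s (v s) = Φ s := by
    intro s hs
    rw [hGdef, hΦ, radTrunc_eq_self (hnormle s hs)]
  have hΦc : ContinuousOn Φ (Icc 0 T) := by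
    have h1 : ContinuousOn (fun s => F (v s + w s)) (Icc 0 T) := by
      refine (hFcW.continuousOn).comp (hvc.add hw) ?_
      intro s hs
      exact mem_closedBall_zero_iff.mpr
        ((norm_add_le _ _).trans (add_le_add (hnormle s hs) (hwW s hs)))
    have h2 : ContinuousOn (fun s => ν • A (w s)) (Icc 0 T) :=
      (A.continuous.comp_continuousOn hw).const_smul ν
    have h3 : ContinuousOn (fun s => lam • w s) (Icc 0 T) := hw.const_smul lam
    have h4 : ContinuousOn (fun s => ν • A (v s)) (Icc 0 T) :=
      (A.continuous.comp_continuousOn hvc).const_smul ν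
    have h5 : ContinuousOn (fun s => lam • v s) (Icc 0 T) := hvc.const_smul lam
    have : ContinuousOn (fun s =>
        -(ν • A (v s)) - lam • v s - F (v s + w s) + g - ν • A (w s) - lam • w s) (Icc 0 T) :=
      ((((h4.neg.sub h5).sub h1).add continuousOn_const).sub h2).sub h3
    simpa only [← hΦ] using this
  -- the integral equation for v
  have hInt : ∀ t ∈ Icc (0:ℝ) T, v t = v₀ + ∫ s in (0:ℝ)..t, Φ s := by
    intro t ht
    have h0t : Icc (0:ℝ) t ⊆ Icc (0:ℝ) T := Icc_subset_Icc le_rfl ht.2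
    have hderiv : ∀ x ∈ Ioo (0:ℝ) t, HasDerivWithinAt v (Φ x) (Ioi x) x := by
      intro x hx
      have hxI : x ∈ Ico (0:ℝ) T := ⟨hx.1.le, lt_of_lt_of_le hx.2 ht.2⟩
      have := (hvd' x hxI).mono Ioi_subset_Ici_self
      rwa [hGΦ x (Ico_subset_Icc_self hxI)] at this
    have hint : IntervalIntegrable Φ volume 0 t :=
      ContinuousOn.intervalIntegrable (by rw [uIcc_of_le ht.1]; exact hΦc.mono h0t)
    have heq := intervalIntegral.integral_eq_sub_of_hasDeriv_right_of_le ht.1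
      (hvc.mono h0t) hderiv hint
    rw [hv0] at heq
    rw [heq]; abel
  -- FTC-1: from the integral equation to the derivative
  have hD : ∀ (u : ℝ → l2Z) (Φu : ℝ → l2Z), ContinuousOn Φu (Icc 0 T) →
      (∀ t ∈ Icc (0:ℝ) T, u t = v₀ + ∫ s in (0:ℝ)..t, Φu s) →
      ∀ t ∈ Ico (0:ℝ) T, HasDerivWithinAt u (Φu t) (Ici t) t := by
    intro u Φu hΦuc hueq t ht
    have htIcc : t ∈ Icc (0:ℝ) T := Ico_subset_Icc_self ht
    have hmemt : Icc (0:ℝ) T ∈ nhdsWithin t (Ici t) := hmemIci t ht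
    have hint : IntervalIntegrable Φu volume 0 t :=
      ContinuousOn.intervalIntegrable
        (by rw [uIcc_of_le ht.1]; exact hΦuc.mono (Icc_subset_Icc le_rfl htIcc.2))
    have hmemt' : Icc (0:ℝ) T ∈ nhdsWithin t (Ioi t) :=
      nhdsWithin_mono t Ioi_subset_Ici_self hmemt
    have hmeas : StronglyMeasurableAtFilter Φu (nhdsWithin t (Ioi t)) volume :=
      ⟨Icc 0 T, hmemt', hΦuc.aestronglyMeasurable measurableSet_Icc⟩
    have hcw : ContinuousWithinAt Φu (Ioi t) t :=
      ((hΦuc t htIcc).mono_of_mem_nhdsWithin hmemt).mono Ioi_subset_Ici_self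
    have hFTC := intervalIntegral.integral_hasDerivWithinAt_right
      (s := Ici t) (t := Ioi t) hint hmeas hcw
    have hder := hFTC.const_add v₀
    exact hder.congr_of_eventuallyEq
      (Filter.eventually_of_mem hmemt fun z hz => hueq z hz) (hueq t htIcc)
  refine ⟨v, ⟨hvc, fun t ht => by simpa only [hΦ] using hInt t ht⟩, ?_⟩
  -- uniqueness
  rintro v₂ ⟨hv₂c, hv₂int⟩
  obtain ⟨ρ₂₀, hρ₂₀⟩ := isCompact_Icc.exists_bound_of_continuousOn hv₂c
  set r₂ : ℝ := max ρ₂₀ r with hr₂def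
  have hr₂0 : 0 ≤ r₂ := hr0.trans (le_max_right _ _)
  have hrr₂ : r ≤ r₂ := le_max_right _ _
  have hv₂bd : ∀ t ∈ Icc (0:ℝ) T, ‖v₂ t‖ ≤ r₂ := fun t ht => (hρ₂₀ t ht).trans (le_max_left _ _)
  obtain ⟨M₂, hM₂0, hM₂lip⟩ := nemytskii_lip f hf F hF (r₂ + W)
  have hFc₂ : LipschitzOnWith M₂.toNNReal F (closedBall 0 (r₂+W)) := by
    rw [lipschitzOnWith_iff_dist_le_mul]
    intro x hx y hy
    rw [dist_eq_norm, dist_eq_norm, Real.coe_toNNReal _ hM₂0]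
    exact hM₂lip x y (mem_closedBall_zero_iff.mp hx) (mem_closedBall_zero_iff.mp hy)
  obtain ⟨Vf, hVf⟩ : ∃ Vf : ℝ → l2Z → l2Z, ∀ t u, Vf t u =
      -(ν • A u) - lam • u - F (u + w t) + g - ν • A (w t) - lam • w t :=
    ⟨_, fun _ _ => rfl⟩
  set sset : ℝ → Set l2Z := fun t => if t ∈ Icc (0:ℝ) T then closedBall 0 r₂ else ∅ with hsset
  have hVlip : ∀ t, LipschitzOnWith (ν*nA + lam + M₂).toNNReal (Vf t) (sset t) := by
    intro t
    by_cases ht : t ∈ Icc (0:ℝ) T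
    · rw [hsset]; simp only [if_pos ht]
      rw [lipschitzOnWith_iff_dist_le_mul]
      intro x hx y hy
      rw [mem_closedBall_zero_iff] at hx hy
      rw [dist_eq_norm, dist_eq_norm, Real.coe_toNNReal _ (by positivity)]
      have hbx : ‖x + w t‖ ≤ r₂ + W := (norm_add_le _ _).trans (add_le_add hx (hwW t ht))
      have hby : ‖y + w t‖ ≤ r₂ + W := (norm_add_le _ _).trans (add_le_add hy (hwW t ht))
      have hdiff : Vf t x - Vf t y
          = -(ν • (A x - A y)) - lam • (x - y) - (F (x + w t) - F (y + w t)) := by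
        rw [hVf, hVf, smul_sub, smul_sub]; abel
      have e1 : ‖A x - A y‖ ≤ nA * ‖x - y‖ := by rw [← map_sub]; exact A.le_opNorm _
      have e2 : ‖F (x + w t) - F (y + w t)‖ ≤ M₂ * ‖x - y‖ := by
        have := hM₂lip _ _ hbx hby
        simpa [add_sub_add_right_eq_sub] using this
      calc ‖Vf t x - Vf t y‖
          ≤ ‖-(ν • (A x - A y)) - lam • (x - y)‖ + ‖F (x + w t) - F (y + w t)‖ := by
            rw [hdiff]; exact norm_sub_le _ _
        _ ≤ (‖ν • (A x - A y)‖ + ‖lam • (x - y)‖) + M₂ * ‖x - y‖ := by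
            refine add_le_add (le_trans (norm_sub_le _ _) ?_) e2
            rw [norm_neg]
        _ = ν * ‖A x - A y‖ + lam * ‖x - y‖ + M₂ * ‖x - y‖ := by
            rw [norm_smul, norm_smul, Real.norm_eq_abs, Real.norm_eq_abs,
              abs_of_nonneg hν.le, abs_of_nonneg hlam.le]
        _ ≤ (ν*nA + lam + M₂) * ‖x - y‖ := by
            have := mul_le_mul_of_nonneg_left e1 hν.le
            nlinarith
    · rw [hsset]; simp only [if_neg ht]
      exact lipschitzOnWith_empty _ _
  -- integrand along v₂
  obtain ⟨Φ₂, hΦ₂⟩ : ∃ Φ₂ : ℝ → l2Z, ∀ s, Φ₂ s =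
      -(ν • A (v₂ s)) - lam • v₂ s - F (v₂ s + w s) + g - ν • A (w s) - lam • w s :=
    ⟨_, fun _ => rfl⟩
  have hΦ₂c : ContinuousOn Φ₂ (Icc 0 T) := by
    have h1 : ContinuousOn (fun s => F (v₂ s + w s)) (Icc 0 T) := by
      refine (hFc₂.continuousOn).comp (hv₂c.add hw) ?_
      intro s hs
      exact mem_closedBall_zero_iff.mpr
        ((norm_add_le _ _).trans (add_le_add (hv₂bd s hs) (hwW s hs)))
    have h2 : ContinuousOn (fun s => ν • A (w s)) (Icc 0 T) :=
      (A.continuous.comp_continuousOn hw).const_smul ν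
    have h3 : ContinuousOn (fun s => lam • w s) (Icc 0 T) := hw.const_smul lam
    have h4 : ContinuousOn (fun s => ν • A (v₂ s)) (Icc 0 T) :=
      (A.continuous.comp_continuousOn hv₂c).const_smul ν
    have h5 : ContinuousOn (fun s => lam • v₂ s) (Icc 0 T) := hv₂c.const_smul lam
    have : ContinuousOn (fun s =>
        -(ν • A (v₂ s)) - lam • v₂ s - F (v₂ s + w s) + g - ν • A (w s) - lam • w s)
        (Icc 0 T) :=
      ((((h4.neg.sub h5).sub h1).add continuousOn_const).sub h2).sub h3
    simpa only [← hΦ₂] using this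
  have hd₂ := hD v₂ Φ₂ hΦ₂c (fun t ht => by
    have := hv₂int t ht
    simpa only [hΦ₂] using this)
  have hd₁ := hD v Φ hΦc hInt
  -- initial values agree
  have e₁ : v 0 = v₀ := by
    have := hInt 0 ⟨le_rfl, hT.le⟩
    simpa using this
  have e₂ : v₂ 0 = v₀ := by
    have := hv₂int 0 ⟨le_rfl, hT.le⟩
    simpa using this
  -- uniqueness via Grönwall
  refine ODE_solution_unique_of_mem_Icc_right (fun t _ => hVlip t) hv₂c
    (fun t ht => ?_) (fun t ht => ?_) hvc (fun t ht => ?_) (fun t ht => ?_) (by rw [e₁, e₂])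
  · have := hd₂ t ht
    have hval : Vf t (v₂ t) = Φ₂ t := by rw [hVf, hΦ₂]
    rwa [hval]
  · rw [hsset]; simp only [if_pos (Ico_subset_Icc_self ht)]
    exact mem_closedBall_zero_iff.mpr (hv₂bd t (Ico_subset_Icc_self ht))
  · have := hd₁ t ht
    have hval : Vf t (v t) = Φ t := by rw [hVf, hΦ]
    rwa [hval]
  · rw [hsset]; simp only [if_pos (Ico_subset_Icc_self ht)]
    exact mem_closedBall_zero_iff.mpr ((hnormle t (Ico_subset_Icc_self ht)).trans hrr₂)

end
end

section
/- Let ν, λ > 0, let A be the operator on ℓ²(ℤ,ℝ) given by (Au)_i = −u_{i−1} + 2u_i − u_{i+1}, let g ∈ ℓ²(ℤ,ℝ), and let f : ℝ → ℝ be continuously differentiable with f(0) = 0 and (f(x) − f(y))(x − y) ≥ 0 for all x,y ∈ ℝ. Let T > 0, let w : [0,T] → ℓ²(ℤ,ℝ) be continuous, and suppose u¹, u² : [0,T] → ℓ²(ℤ,ℝ) are continuous functions satisfying, for k = 1,2 and all t ∈ [0,T], u^k(t) = u^k(0) + ∫₀ᵗ ( −νAu^k(s) − λu^k(s) − f̃(u^k(s))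 + g ) ds + w(t), where f̃ is the Nemytskii operator of f. Then for all t ∈ [0,T]: ‖u¹(t) − u²(t)‖ ≤ ‖u¹(0) − u²(0)‖. In particular, if u¹(0) = u²(0) then u¹ ≡ u², so the solution is unique and depends continuously on the initial data. -/
noncomputable section

open Set intervalIntegral

open scoped ENNReal RealInnerProductSpace

lemma l2Z_sq_summable (v : l2Z) : Summable (fun i : ℤ => (v i)^2) := by
  have h := (memℓp_gen_iff (p := 2) (by norm_num) (f := (⇑v : ∀ _ : ℤ, ℝ))).1 (lp.memℓp v)
  refine h.congr fun i => ?_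
  rw [show ((2:ℝ≥0∞)).toReal = (2:ℝ) by norm_num, Real.rpow_two, Real.norm_eq_abs, sq_abs]

lemma l2Z_inner_tsum (v w : l2Z) : ⟪v, w⟫ = ∑' i : ℤ, v i * w i := by
  rw [lp.inner_eq_tsum]
  simp [RCLike.inner_apply]
  exact tsum_congr fun i => mul_comm _ _

lemma l2Z_prod_summable (v w : l2Z) : Summable (fun i : ℤ => v i * w i) := by
  have h := lp.summable_inner (𝕜 := ℝ) v w
  exact (by simpa [RCLike.inner_apply] using h : Summable fun i : ℤ => w i * v i).congr fun i => mul_comm _ _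

lemma Apos (A : l2Z →L[ℝ] l2Z)
    (hA : ∀ (u : l2Z) (i : ℤ), A u i = -u (i - 1) + 2 * u i - u (i + 1))
    (v : l2Z) : 0 ≤ ⟪A v, v⟫ := by
  have hsq : Summable (fun i : ℤ => (v i)^2) := l2Z_sq_summable v
  have hprod : Summable (fun i : ℤ => v i * v (i+1)) := by
    have habs : Summable (fun i : ℤ => |v i * v (i+1)|) := by
      have hsq' : Summable (fun i : ℤ => (v (i+1))^2) := by
        have := (Equiv.addRight (1:ℤ)).summable_iff (f := fun i : ℤ => (v i)^2)
        exact this.2 hsq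
      refine Summable.of_nonneg_of_le (fun i => abs_nonneg _) (fun i => ?_)
        (((hsq.add hsq').div_const 2))
      rw [abs_mul]
      nlinarith [sq_nonneg (|v i| - |v (i+1)|), sq_abs (v i), sq_abs (v (i+1)),
        abs_nonneg (v i), abs_nonneg (v (i+1))]
    exact habs.of_abs
  have hprod' : Summable (fun i : ℤ => v (i-1) * v i) := by
    have := (Equiv.subRight (1:ℤ)).summable_iff (f := fun i : ℤ => v i * v (i+1))
    refine (this.2 hprod).congr fun i => ?_
    simp [sub_add_cancel]
  have hg1 : Summable (fun i : ℤ => (v i - v (i-1)) * v i) :=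
    (hsq.sub hprod').congr fun i => by ring
  have hg2 : Summable (fun i : ℤ => (v i - v (i+1)) * v i) :=
    (hsq.sub hprod).congr fun i => by ring
  rw [l2Z_inner_tsum]
  have hsplit : ∑' i : ℤ, (A v) i * v i
      = (∑' i : ℤ, (v i - v (i-1)) * v i) + ∑' i : ℤ, (v i - v (i+1)) * v i := by
    rw [← Summable.tsum_add hg1 hg2]
    refine tsum_congr fun i => ?_
    rw [hA]; ring
  have hg1' : (∑' i : ℤ, (v i - v (i-1)) * v i)
      = ∑' i : ℤ, (v (i+1) - v i) * v (i+1) := by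
    rw [← (Equiv.addRight (1:ℤ)).tsum_eq (f := fun i : ℤ => (v i - v (i-1)) * v i)]
    refine tsum_congr fun i => ?_
    simp [add_sub_cancel_right]
  have hg1'' : Summable (fun i : ℤ => (v (i+1) - v i) * v (i+1)) := by
    have := (Equiv.addRight (1:ℤ)).summable_iff (f := fun i : ℤ => (v i - v (i-1)) * v i)
    refine (this.2 hg1).congr fun i => ?_
    simp [add_sub_cancel_right]
  rw [hsplit, hg1', ← Summable.tsum_add hg1'' hg2]
  refine tsum_nonneg fun i => ?_
  have : (v (i+1) - v i) * v (i+1) + (v i - v (i+1)) * v i = (v i - v (i+1))^2 := by ring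
  rw [this]; positivity

lemma Fmono (f : ℝ → ℝ) (hmono : ∀ x y : ℝ, 0 ≤ (f x - f y) * (x - y))
    (F : l2Z → l2Z) (hF : ∀ (u : l2Z) (i : ℤ), F u i = f (u i))
    (a b : l2Z) : 0 ≤ ⟪F a - F b, a - b⟫ := by
  rw [l2Z_inner_tsum]
  refine tsum_nonneg fun i => ?_
  rw [lp.coeFn_sub, lp.coeFn_sub]
  simp only [Pi.sub_apply, hF]
  exact hmono _ _

lemma Fcont (f : ℝ → ℝ) (hf : ContDiff ℝ 1 f)
    (F : l2Z → l2Z) (hF : ∀ (u : l2Z) (i : ℤ), F u i = f (u i)) :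
    Continuous F := by
  rw [continuous_iff_continuousAt]
  intro x
  set R : ℝ := ‖x‖ + 1 with hR
  have hR0 : 0 < R := by positivity
  obtain ⟨C, hC⟩ := (isCompact_Icc (a := -R) (b := R)).exists_bound_of_continuousOn
    ((hf.continuous_deriv le_rfl).continuousOn)
  set M : ℝ := max C 0 with hM
  have hM0 : 0 ≤ M := le_max_right _ _
  have hlipf : ∀ a ∈ Icc (-R) R, ∀ b ∈ Icc (-R) R, ‖f a - f b‖ ≤ M * ‖a - b‖ := by
    intro a ha b hb
    exact (convex_Icc _ _).norm_image_sub_le_of_norm_deriv_le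
      (fun y _ => (hf.differentiable one_ne_zero).differentiableAt)
      (fun y hy => le_trans (hC y hy) (le_max_left _ _)) hb ha
  have key : ∀ a b : l2Z, ‖a‖ ≤ R → ‖b‖ ≤ R → ‖F a - F b‖ ≤ M * ‖a - b‖ := by
    intro a b haR hbR
    have h2 : (0:ℝ) < ((2:ℝ≥0∞)).toReal := by norm_num
    refine lp.norm_le_of_tsum_le h2 (by positivity) ?_
    have hmem : ∀ (u : l2Z), ‖u‖ ≤ R → ∀ i, u i ∈ Icc (-R) R := by
      intro u hu i
      have := lp.norm_apply_le_norm (E := fun _ : ℤ => ℝ) (p := 2) two_ne_zero u i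
      rw [Real.norm_eq_abs] at this
      exact abs_le.1 (this.trans hu)
    have hterm : ∀ i : ℤ, ‖(F a - F b) i‖ ^ ((2:ℝ≥0∞)).toReal
        ≤ (M * ‖(a - b) i‖) ^ (2:ℕ) := by
      intro i
      rw [show ((2:ℝ≥0∞)).toReal = (2:ℝ) by norm_num, Real.rpow_two]
      have h1 : ‖(F a - F b) i‖ ≤ M * ‖(a - b) i‖ := by
        rw [lp.coeFn_sub, Pi.sub_apply, hF, hF, lp.coeFn_sub, Pi.sub_apply]
        exact hlipf _ (hmem a haR i) _ (hmem b hbR i)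
      exact pow_le_pow_left₀ (norm_nonneg _) h1 2
    have hsum2 : Summable (fun i : ℤ => (M * ‖(a - b) i‖) ^ (2:ℕ)) := by
      have := l2Z_sq_summable (a - b)
      refine ((this.mul_left (M^2)).congr fun i => ?_)
      rw [Real.norm_eq_abs]; ring_nf; rw [sq_abs]
    calc ∑' i : ℤ, ‖(F a - F b) i‖ ^ ((2:ℝ≥0∞)).toReal
        ≤ ∑' i : ℤ, (M * ‖(a - b) i‖) ^ (2:ℕ) := by
          refine Summable.tsum_le_tsum hterm ?_ hsum2
          refine Summable.of_nonneg_of_le (fun i => ?_) hterm hsum2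
          positivity
      _ = (M^2) * ∑' i : ℤ, ‖(a - b) i‖ ^ ((2:ℝ≥0∞)).toReal := by
          rw [← tsum_mul_left]
          refine tsum_congr fun i => ?_
          rw [show ((2:ℝ≥0∞)).toReal = (2:ℝ) by norm_num, Real.rpow_two]; ring
      _ = (M^2) * ‖a - b‖ ^ ((2:ℝ≥0∞)).toReal := by
          rw [← lp.norm_rpow_eq_tsum h2]
      _ = (M * ‖a - b‖) ^ ((2:ℝ≥0∞)).toReal := by
          rw [show ((2:ℝ≥0∞)).toReal = (2:ℝ) by norm_num, Real.rpow_two, Real.rpow_two]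
          ring
  have hlipF : LipschitzOnWith (M.toNNReal) F (Metric.closedBall 0 R) := by
    refine LipschitzOnWith.of_dist_le_mul fun a ha b hb => ?_
    rw [dist_eq_norm, dist_eq_norm, Real.coe_toNNReal _ hM0]
    exact key a b (by simpa using mem_closedBall_zero_iff.1 ha)
      (by simpa using mem_closedBall_zero_iff.1 hb)
  exact (hlipF.continuousOn).continuousAt
    (Metric.closedBall_mem_nhds_of_mem (by simp only [Metric.mem_ball, dist_zero_right, hR]; linarith [norm_nonneg x]))

/-- **contraction in the initial data.** If `u¹, u²` are
continuous solutions of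
`u(t) = u(0) + ∫₀ᵗ (−νAu − λu − f̃(u) + g) ds + w(t)` on `[0,T]`, with `f`
monotone and `f(0) = 0`, then `‖u¹(t) − u²(t)‖ ≤ ‖u¹(0) − u²(0)‖` for all
`t ∈ [0,T]`; in particular, equal initial data force `u¹ = u²` on `[0,T]`. -/
theorem lattice_solutions_contraction
    (ν lam : ℝ) (hν : 0 < ν) (hlam : 0 < lam)
    (A : l2Z →L[ℝ] l2Z)
    (hA : ∀ (u : l2Z) (i : ℤ), A u i = -u (i - 1) + 2 * u i - u (i + 1))
    (g : l2Z)
    (f : ℝ → ℝ) (hf : ContDiff ℝ 1 f) (hf0 : f 0 = 0)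
    (hmono : ∀ x y : ℝ, 0 ≤ (f x - f y) * (x - y))
    (F : l2Z → l2Z) (hF : ∀ (u : l2Z) (i : ℤ), F u i = f (u i))
    (T : ℝ) (hT : 0 < T)
    (w : ℝ → l2Z) (hw : ContinuousOn w (Icc 0 T))
    (u1 u2 : ℝ → l2Z)
    (hu1c : ContinuousOn u1 (Icc 0 T)) (hu2c : ContinuousOn u2 (Icc 0 T))
    (hu1 : ∀ t ∈ Icc (0 : ℝ) T,
      u1 t = u1 0 + (∫ s in (0 : ℝ)..t,
        (-(ν • A (u1 s)) - lam • u1 s - F (u1 s) + g)) + w t)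
    (hu2 : ∀ t ∈ Icc (0 : ℝ) T,
      u2 t = u2 0 + (∫ s in (0 : ℝ)..t,
        (-(ν • A (u2 s)) - lam • u2 s - F (u2 s) + g)) + w t) :
    (∀ t ∈ Icc (0 : ℝ) T, ‖u1 t - u2 t‖ ≤ ‖u1 0 - u2 0‖) ∧
    (u1 0 = u2 0 → ∀ t ∈ Icc (0 : ℝ) T, u1 t = u2 t) := by
  have hFc : Continuous F := Fcont f hf F hF
  set proj : ℝ → ℝ := fun s => max 0 (min s T) with hproj
  have hprojc : Continuous proj := continuous_const.max (continuous_id.min continuous_const)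
  have hprojmem : ∀ s, proj s ∈ Icc (0:ℝ) T :=
    fun s => ⟨le_max_left _ _, max_le hT.le (min_le_right _ _)⟩
  have hprojid : ∀ s ∈ Icc (0:ℝ) T, proj s = s := by
    intro s hs
    simp only [hproj]
    rw [min_eq_left hs.2, max_eq_right hs.1]
  set K1 : ℝ → l2Z := fun s => -(ν • A (u1 (proj s))) - lam • u1 (proj s) - F (u1 (proj s)) + g
    with hK1def
  set K2 : ℝ → l2Z := fun s => -(ν • A (u2 (proj s))) - lam • u2 (proj s) - F (u2 (proj s)) + g
    with hK2def
  have hc1 : Continuous fun s => u1 (proj s) := hu1c.comp_continuous hprojc hprojmem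
  have hc2 : Continuous fun s => u2 (proj s) := hu2c.comp_continuous hprojc hprojmem
  have hK1 : Continuous K1 :=
    (((((continuous_const (y := ν)).smul (A.continuous.comp hc1)).neg).sub
      ((continuous_const (y := lam)).smul hc1)).sub (hFc.comp hc1)).add continuous_const
  have hK2 : Continuous K2 :=
    (((((continuous_const (y := ν)).smul (A.continuous.comp hc2)).neg).sub
      ((continuous_const (y := lam)).smul hc2)).sub (hFc.comp hc2)).add continuous_const
  set H : ℝ → l2Z := fun s => K1 s - K2 s with hHdef
  have hH : Continuous H := hK1.sub hK2
  set V : ℝ → l2Z := fun t => (u1 0 - u2 0) + ∫ s in (0:ℝ)..t, H s with hVdef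
  have hVder : ∀ t, HasDerivAt V (H t) t := by
    intro t
    have := ((hH.integral_hasStrictDerivAt 0 t).hasDerivAt).const_add (u1 0 - u2 0)
    exact this
  have hVeq : ∀ t ∈ Icc (0:ℝ) T, V t = u1 t - u2 t := by
    intro t ht
    have hsub : uIcc (0:ℝ) t ⊆ Icc (0:ℝ) T := by
      rw [uIcc_of_le ht.1]
      exact Icc_subset_Icc le_rfl ht.2
    have hint1 : (∫ s in (0:ℝ)..t, (-(ν • A (u1 s)) - lam • u1 s - F (u1 s) + g))
        = ∫ s in (0:ℝ)..t, K1 s := by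
      refine intervalIntegral.integral_congr fun s hs => ?_
      simp only [hK1def, hprojid s (hsub hs)]
    have hint2 : (∫ s in (0:ℝ)..t, (-(ν • A (u2 s)) - lam • u2 s - F (u2 s) + g))
        = ∫ s in (0:ℝ)..t, K2 s := by
      refine intervalIntegral.integral_congr fun s hs => ?_
      simp only [hK2def, hprojid s (hsub hs)]
    rw [hVdef]
    simp only
    have hsplitI : (∫ s in (0:ℝ)..t, H s) = (∫ s in (0:ℝ)..t, K1 s) - ∫ s in (0:ℝ)..t, K2 s :=
      intervalIntegral.integral_sub (hK1.intervalIntegrable 0 t) (hK2.intervalIntegrable 0 t)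
    rw [hu1 t ht, hu2 t ht, hint1, hint2, hsplitI]
    abel
  set φ : ℝ → ℝ := fun t => ⟪V t, V t⟫ with hφdef
  have hφder : ∀ t, HasDerivAt φ (⟪V t, H t⟫ + ⟪H t, V t⟫) t :=
    fun t => HasDerivAt.inner ℝ (hVder t) (hVder t)
  have hφnonpos : ∀ t ∈ Icc (0:ℝ) T, ⟪V t, H t⟫ + ⟪H t, V t⟫ ≤ 0 := by
    intro t ht
    have hVt : V t = u1 t - u2 t := hVeq t ht
    have hHt : H t = -(ν • A (u1 t - u2 t)) - lam • (u1 t - u2 t) - (F (u1 t) - F (u2 t)) := by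
      simp only [hHdef, hK1def, hK2def, hprojid t ht, map_sub, smul_sub]
      abel
    have h1 : ⟪H t, V t⟫ ≤ 0 := by
      rw [hVt, hHt]
      have hApos := Apos A hA (u1 t - u2 t)
      have hFm := Fmono f hmono F hF (u1 t) (u2 t)
      have hself : (0:ℝ) ≤ ⟪u1 t - u2 t, u1 t - u2 t⟫ := real_inner_self_nonneg
      rw [inner_sub_left, inner_sub_left, inner_neg_left, real_inner_smul_left,
        real_inner_smul_left]
      nlinarith
    have h2 : ⟪V t, H t⟫ ≤ 0 := by rw [real_inner_comm]; exact h1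
    linarith
  have hanti : AntitoneOn φ (Icc 0 T) := by
    refine antitoneOn_of_deriv_nonpos (convex_Icc 0 T) ?_ ?_ ?_
    · exact Continuous.continuousOn (continuous_iff_continuousAt.2
        fun t => (hφder t).continuousAt)
    · intro t _
      exact (hφder t).differentiableAt.differentiableWithinAt
    · intro t ht
      rw [interior_Icc] at ht
      rw [(hφder t).deriv]
      exact hφnonpos t (Ioo_subset_Icc_self ht)
  have hmain : ∀ t ∈ Icc (0:ℝ) T, ‖u1 t - u2 t‖ ≤ ‖u1 0 - u2 0‖ := by
    intro t ht
    have h0 : (0:ℝ) ∈ Icc (0:ℝ) T := ⟨le_rfl, hT.le⟩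
    have hle := hanti h0 ht ht.1
    rw [hφdef] at hle
    simp only at hle
    rw [hVeq 0 h0, hVeq t ht, real_inner_self_eq_norm_sq, real_inner_self_eq_norm_sq] at hle
    nlinarith [norm_nonneg (u1 t - u2 t), norm_nonneg (u1 0 - u2 0)]
  refine ⟨hmain, fun h0eq t ht => ?_⟩
  have := hmain t ht
  rw [h0eq, sub_self, norm_zero] at this
  have : u1 t - u2 t = 0 := by
    have := le_antisymm this (norm_nonneg _)
    exact norm_eq_zero.1 this
  exact sub_eq_zero.1 this

end
end

section
/- Let λ > 0 and let K(t,s) = (1/(2λ)) ( e^{−λ|t−s|} − e^{−λ(t+s)} ) for s,t ∈ [0,1]. Let μ ≠ 0 be a real number and let h : [0,1] → ℝ be a continuous function satisfying ∫₀¹ K(t,s) h(t) dt = μ h(s) for all s ∈ [0,1]. Then h is twice continuously differentiable on [0,1] and satisfies (λ²μ − 1) h(s) = μ h″(s) for all s ∈ [0,1], together with the boundary conditions h(0) = 0 and λ h(1) = −h′(1). -/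
open Real intervalIntegral Set

/-- Let `λ > 0`,
`K(t,s) = (1/(2λ))(e^{−λ|t−s|} − e^{−λ(t+s)})`, `μ ≠ 0`, and let `h` be
continuous on `[0,1]` with `∫₀¹ K(t,s) h(t) dt = μ h(s)` for all `s ∈ [0,1]`.
Then `h` is twice continuously differentiable on `[0,1]` and satisfies
`(λ²μ − 1) h(s) = μ h″(s)` on `[0,1]`, with `h(0) = 0` and `λ h(1) = −h′(1)`. -/
theorem eigenfunction_ode_of_kernel (lam : ℝ) (hlam : 0 < lam)
    (μ : ℝ) (hμ : μ ≠ 0) (h : ℝ → ℝ) (hcont : ContinuousOn h (Icc 0 1))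
    (heig : ∀ s ∈ Icc (0 : ℝ) 1,
      (∫ t in (0 : ℝ)..1,
          (1 / (2 * lam)) *
            (Real.exp (-lam * |t - s|) - Real.exp (-lam * (t + s))) * h t)
        = μ * h s) :
    ∃ h' h'' : ℝ → ℝ,
      (∀ s ∈ Icc (0 : ℝ) 1, HasDerivWithinAt h (h' s) (Icc 0 1) s) ∧
      (∀ s ∈ Icc (0 : ℝ) 1, HasDerivWithinAt h' (h'' s) (Icc 0 1) s) ∧
      ContinuousOn h' (Icc 0 1) ∧ ContinuousOn h'' (Icc 0 1) ∧
      (∀ s ∈ Icc (0 : ℝ) 1, (lam ^ 2 * μ - 1) * h s = μ * h'' s) ∧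
      h 0 = 0 ∧ lam * h 1 = -h' 1 := by
  have h01 : (0:ℝ) ≤ 1 := zero_le_one
  set hh : ℝ → ℝ := fun t => h (Set.projIcc (0:ℝ) 1 h01 t) with hhdef
  have hhcont : Continuous hh :=
    hcont.comp_continuous (continuous_subtype_val.comp (continuous_projIcc))
      (fun x => (Set.projIcc (0:ℝ) 1 h01 x).2)
  have hh_eq : ∀ t ∈ Icc (0:ℝ) 1, hh t = h t := by
    intro t ht
    simp [hhdef, Set.projIcc_of_mem h01 ht]
  set F : ℝ → ℝ := fun s => ∫ t in (0:ℝ)..s, Real.exp (lam*t) * hh t with hFdef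
  set G : ℝ → ℝ := fun s => ∫ t in (0:ℝ)..s, Real.exp (-(lam*t)) * hh t with hGdef
  set A : ℝ := G 1 with hAdef
  have cF : Continuous fun t => Real.exp (lam*t) * hh t := by fun_prop
  have cG : Continuous fun t => Real.exp (-(lam*t)) * hh t := by fun_prop
  have hF : ∀ s, HasDerivAt F (Real.exp (lam*s) * hh s) s := by
    intro s
    exact intervalIntegral.integral_hasDerivAt_right (cF.intervalIntegrable _ _)
      cF.stronglyMeasurable.stronglyMeasurableAtFilter cF.continuousAt
  have hG : ∀ s, HasDerivAt G (Real.exp (-(lam*s)) * hh s) s := by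
    intro s
    exact intervalIntegral.integral_hasDerivAt_right (cG.intervalIntegrable _ _)
      cG.stronglyMeasurable.stronglyMeasurableAtFilter cG.continuousAt
  set g : ℝ → ℝ := fun s => (1/(2*lam)) *
      (Real.exp (-(lam*s)) * F s + Real.exp (lam*s) * (A - G s) - Real.exp (-(lam*s)) * A)
    with hgdef
  -- Step 1: kernel integral equals g s
  have key : ∀ s ∈ Icc (0:ℝ) 1, μ * h s = g s := by
    intro s hs
    rw [← heig s hs]
    have hint : ∀ a b : ℝ, IntervalIntegrable
        (fun t => (1/(2*lam)) * (Real.exp (-lam * |t - s|) - Real.exp (-lam * (t + s))) * hh t)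
        MeasureTheory.volume a b := by
      intro a b
      apply Continuous.intervalIntegrable
      fun_prop
    have hrepl : (∫ t in (0:ℝ)..1,
        (1/(2*lam)) * (Real.exp (-lam * |t - s|) - Real.exp (-lam * (t + s))) * h t)
        = ∫ t in (0:ℝ)..1,
        (1/(2*lam)) * (Real.exp (-lam * |t - s|) - Real.exp (-lam * (t + s))) * hh t := by
      apply intervalIntegral.integral_congr
      intro t ht
      rw [Set.uIcc_of_le h01] at ht
      dsimp only
      rw [hh_eq t ht]
    rw [hrepl]
    rw [← intervalIntegral.integral_add_adjacent_intervals (b := s) (hint 0 s) (hint s 1)]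
    have I1 : (∫ t in (0:ℝ)..s,
        (1/(2*lam)) * (Real.exp (-lam * |t - s|) - Real.exp (-lam * (t + s))) * hh t)
        = (1/(2*lam)) * Real.exp (-(lam*s)) * F s
          - (1/(2*lam)) * Real.exp (-(lam*s)) * G s := by
      have e1 : Set.EqOn
          (fun t => (1/(2*lam)) * (Real.exp (-lam * |t - s|) - Real.exp (-lam * (t + s))) * hh t)
          (fun t => ((1/(2*lam)) * Real.exp (-(lam*s))) * (Real.exp (lam*t) * hh t)
            - ((1/(2*lam)) * Real.exp (-(lam*s))) * (Real.exp (-(lam*t)) * hh t))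
          (Set.uIcc 0 s) := by
        intro t ht
        rw [Set.uIcc_of_le hs.1] at ht
        have habs : |t - s| = s - t := by rw [abs_of_nonpos (by linarith [ht.2] : t - s ≤ 0)]; ring
        simp only [habs]
        rw [show -lam * (s - t) = -(lam*s) + lam*t by ring,
          show -lam * (t + s) = -(lam*s) + -(lam*t) by ring, Real.exp_add, Real.exp_add]
        ring
      rw [intervalIntegral.integral_congr e1,
        intervalIntegral.integral_sub
          (by apply Continuous.intervalIntegrable; fun_prop)
          (by apply Continuous.intervalIntegrable; fun_prop),
        intervalIntegral.integral_const_mul, intervalIntegral.integral_const_mul]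
    have I2 : (∫ t in s..(1:ℝ),
        (1/(2*lam)) * (Real.exp (-lam * |t - s|) - Real.exp (-lam * (t + s))) * hh t)
        = ((1/(2*lam)) * Real.exp (lam*s) - (1/(2*lam)) * Real.exp (-(lam*s))) * (A - G s) := by
      have e2 : Set.EqOn
          (fun t => (1/(2*lam)) * (Real.exp (-lam * |t - s|) - Real.exp (-lam * (t + s))) * hh t)
          (fun t => ((1/(2*lam)) * Real.exp (lam*s) - (1/(2*lam)) * Real.exp (-(lam*s)))
            * (Real.exp (-(lam*t)) * hh t))
          (Set.uIcc s 1) := by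
        intro t ht
        rw [Set.uIcc_of_le hs.2] at ht
        have habs : |t - s| = t - s := abs_of_nonneg (by linarith [ht.1])
        simp only [habs]
        rw [show -lam * (t - s) = lam*s + -(lam*t) by ring,
          show -lam * (t + s) = -(lam*s) + -(lam*t) by ring, Real.exp_add, Real.exp_add]
        ring
      rw [intervalIntegral.integral_congr e2, intervalIntegral.integral_const_mul]
      have : (∫ t in s..(1:ℝ), Real.exp (-(lam*t)) * hh t) = A - G s := by
        rw [hAdef, hGdef]
        exact (intervalIntegral.integral_interval_sub_left (cG.intervalIntegrable _ _)
          (cG.intervalIntegrable _ _)).symm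
      rw [this]
    rw [I1, I2, hgdef]
    ring
  -- derivatives of g
  set g' : ℝ → ℝ := fun s => (1/2) *
      (-(Real.exp (-(lam*s)) * F s) + Real.exp (lam*s) * (A - G s) + Real.exp (-(lam*s)) * A)
    with hg'def
  set g'' : ℝ → ℝ := fun s => (lam/2) *
      (Real.exp (-(lam*s)) * F s + Real.exp (lam*s) * (A - G s) - Real.exp (-(lam*s)) * A)
      - hh s
    with hg''def
  have eneg : ∀ s : ℝ, HasDerivAt (fun s => Real.exp (-(lam*s))) (-lam * Real.exp (-(lam*s))) s := by
    intro s
    have : HasDerivAt (fun s : ℝ => -(lam*s)) (-lam) s := by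
      exact (by simpa using (hasDerivAt_id s).const_mul lam : HasDerivAt (fun y : ℝ => lam * y) lam s).neg
    simpa [mul_comm] using this.exp
  have epos : ∀ s : ℝ, HasDerivAt (fun s => Real.exp (lam*s)) (lam * Real.exp (lam*s)) s := by
    intro s
    have : HasDerivAt (fun s : ℝ => lam*s) lam s := by
      simpa using (hasDerivAt_id s).const_mul lam
    simpa [mul_comm] using this.exp
  have hg : ∀ s, HasDerivAt g (g' s) s := by
    intro s
    have d1 : HasDerivAt (fun s => Real.exp (-(lam*s)) * F s)
        ((-lam * Real.exp (-(lam*s))) * F s + Real.exp (-(lam*s)) * (Real.exp (lam*s) * hh s)) s :=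
      (eneg s).mul (hF s)
    have d2 : HasDerivAt (fun s => Real.exp (lam*s) * (A - G s))
        ((lam * Real.exp (lam*s)) * (A - G s)
          + Real.exp (lam*s) * (-(Real.exp (-(lam*s)) * hh s))) s :=
      (epos s).mul (((hG s).const_sub A))
    have d3 : HasDerivAt (fun s => Real.exp (-(lam*s)) * A)
        ((-lam * Real.exp (-(lam*s))) * A) s := (eneg s).mul_const A
    have := (((d1.add d2).sub d3).const_mul (1/(2*lam)))
    convert this using 1
    case e'_4 => rfl
    case e'_5 => rfl
    case e'_8 => rfl
    rw [hg'def]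
    field_simp
    ring
  have hg' : ∀ s, HasDerivAt g' (g'' s) s := by
    intro s
    have d1 : HasDerivAt (fun s => Real.exp (-(lam*s)) * F s)
        ((-lam * Real.exp (-(lam*s))) * F s + Real.exp (-(lam*s)) * (Real.exp (lam*s) * hh s)) s :=
      (eneg s).mul (hF s)
    have d2 : HasDerivAt (fun s => Real.exp (lam*s) * (A - G s))
        ((lam * Real.exp (lam*s)) * (A - G s)
          + Real.exp (lam*s) * (-(Real.exp (-(lam*s)) * hh s))) s :=
      (epos s).mul (((hG s).const_sub A))
    have d3 : HasDerivAt (fun s => Real.exp (-(lam*s)) * A)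
        ((-lam * Real.exp (-(lam*s))) * A) s := (eneg s).mul_const A
    have := (((d1.neg.add d2).add d3).const_mul (1/2 : ℝ))
    convert this using 1
    case e'_4 => rfl
    case e'_5 => rfl
    case e'_8 => rfl
    have hE : Real.exp (-(lam*s)) * Real.exp (lam*s) = 1 := by
      rw [← Real.exp_add]; simp
    rw [hg''def]
    linear_combination (hh s) * hE
  refine ⟨fun s => μ⁻¹ * g' s, fun s => μ⁻¹ * g'' s, ?_, ?_, ?_, ?_, ?_, ?_, ?_⟩
  · intro s hs
    have : HasDerivWithinAt (fun s => μ⁻¹ * g s) (μ⁻¹ * g' s) (Icc 0 1) s :=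
      ((hg s).const_mul μ⁻¹).hasDerivWithinAt
    refine this.congr (fun y hy => ?_) ?_
    · rw [← key y hy]; field_simp
    · rw [← key s hs]; field_simp
  · intro s hs
    exact ((hg' s).const_mul μ⁻¹).hasDerivWithinAt
  · have cFc : Continuous F := continuous_iff_continuousAt.mpr fun s => (hF s).continuousAt
    have cGc : Continuous G := continuous_iff_continuousAt.mpr fun s => (hG s).continuousAt
    have : Continuous fun s => μ⁻¹ * g' s := by
      rw [hg'def]; fun_prop
    exact this.continuousOn
  · have cFc : Continuous F := continuous_iff_continuousAt.mpr fun s => (hF s).continuousAt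
    have cGc : Continuous G := continuous_iff_continuousAt.mpr fun s => (hG s).continuousAt
    have : Continuous fun s => μ⁻¹ * g'' s := by
      rw [hg''def]; fun_prop
    exact this.continuousOn
  · intro s hs
    have hk := key s hs
    have hhe := hh_eq s hs
    have hX : μ * (μ⁻¹ * g'' s) = g'' s := by field_simp
    rw [hX, hg''def]
    simp only
    rw [hgdef] at hk
    simp only at hk
    rw [hhe]
    -- goal: (lam^2*μ - 1) * h s = lam/2 * (...) - h s, with μ * h s = (1/(2 lam)) * (...)
    field_simp at hk
    linear_combination (lam/2) * hk
  · have hk := key 0 ⟨le_refl 0, h01⟩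
    have hF0 : F 0 = 0 := intervalIntegral.integral_same
    have hG0 : G 0 = 0 := intervalIntegral.integral_same
    rw [hgdef] at hk
    simp only [hF0, hG0, mul_zero, neg_zero, sub_zero] at hk
    have : μ * h 0 = 0 := by rw [hk]; ring
    exact (mul_eq_zero.mp this).resolve_left hμ
  · have hk := key 1 ⟨h01, le_refl 1⟩
    have hl : lam * g 1 = -(g' 1) := by
      rw [hgdef, hg'def]
      simp only
      rw [hAdef]
      field_simp
      ring
    have h1 : h 1 = μ⁻¹ * g 1 := by rw [← hk]; field_simp
    have h2 : lam * h 1 = μ⁻¹ * (lam * g 1) := by rw [h1]; ring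
    rw [h2, hl]
    ring
end

section
/- Let λ > 0, and let γ > 0 satisfy tan(γ) = −γ/λ (with cos(γ) ≠ 0). Set μ = 1/(λ² + γ²) and h(s) = sin(γ s). Then for all s ∈ [0,1]: ∫₀¹ K(t,s) h(t) dt = μ h(s), where K(t,s) = (1/(2λ)) ( e^{−λ|t−s|} − e^{−λ(t+s)} ). That is, sin(γ·) is an eigenfunction of the integral operator with kernel K with eigenvalue 1/(λ² + γ²). -/
open Real intervalIntegral Set

/-- Let `λ > 0` and `γ > 0` with `cos γ ≠ 0` and
`tan γ = −γ/λ`. Set `μ = 1/(λ² + γ²)`. Then `sin(γ·)` is an eigenfunction of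
the integral operator with kernel
`K(t,s) = (1/(2λ))(e^{−λ|t−s|} − e^{−λ(t+s)})` with eigenvalue `μ`:
`∫₀¹ K(t,s) sin(γt) dt = μ sin(γs)` for all `s ∈ [0,1]`. -/
theorem sin_eigenfunction_of_kernel (lam γ : ℝ) (hlam : 0 < lam) (hγ : 0 < γ)
    (hcos : Real.cos γ ≠ 0) (htan : Real.tan γ = -γ / lam) :
    ∀ s ∈ Icc (0 : ℝ) 1,
      (∫ t in (0 : ℝ)..1,
          (1 / (2 * lam)) *
            (Real.exp (-lam * |t - s|) - Real.exp (-lam * (t + s))) *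
            Real.sin (γ * t))
        = (1 / (lam ^ 2 + γ ^ 2)) * Real.sin (γ * s) := by
  intro s hs
  obtain ⟨hs0, hs1⟩ := hs
  have hD : lam ^ 2 + γ ^ 2 ≠ 0 := by positivity
  have hid : lam * Real.sin γ + γ * Real.cos γ = 0 := by
    rw [Real.tan_eq_sin_div_cos] at htan
    field_simp at htan
    linarith
  -- basic derivatives
  have h1 : ∀ t : ℝ, HasDerivAt (fun t => Real.exp (lam*t)) (lam * Real.exp (lam*t)) t := by
    intro t; simpa [mul_comm] using ((hasDerivAt_id t).const_mul lam).exp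
  have h1' : ∀ t : ℝ, HasDerivAt (fun t => Real.exp (-(lam*t))) (-lam * Real.exp (-(lam*t))) t := by
    intro t
    have := (((hasDerivAt_id t).const_mul lam).neg).exp
    simpa [mul_comm] using this
  have h2 : ∀ t : ℝ, HasDerivAt (fun t => Real.sin (γ*t)) (γ * Real.cos (γ*t)) t := by
    intro t; simpa [mul_comm] using ((hasDerivAt_id t).const_mul γ).sin
  have h3 : ∀ t : ℝ, HasDerivAt (fun t => Real.cos (γ*t)) (-(γ * Real.sin (γ*t))) t := by
    intro t; simpa [mul_comm] using ((hasDerivAt_id t).const_mul γ).cos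
  have hd1 : ∀ t : ℝ, HasDerivAt (fun t => Real.exp (lam*t) * (lam * Real.sin (γ*t) - γ * Real.cos (γ*t)))
      ((lam^2+γ^2) * (Real.exp (lam*t) * Real.sin (γ*t))) t := by
    intro t
    have := (h1 t).mul (((h2 t).const_mul lam).sub ((h3 t).const_mul γ))
    refine this.congr_deriv ?_; simp only [Pi.sub_apply]; ring
  have hd2 : ∀ t : ℝ, HasDerivAt (fun t => Real.exp (-(lam*t)) * (lam * Real.sin (γ*t) + γ * Real.cos (γ*t)))
      (-((lam^2+γ^2) * (Real.exp (-(lam*t)) * Real.sin (γ*t)))) t := by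
    intro t
    have := (h1' t).mul (((h2 t).const_mul lam).add ((h3 t).const_mul γ))
    refine this.congr_deriv ?_; simp only [Pi.add_apply]; ring
  -- the two nice integrands
  set E1 : ℝ → ℝ := fun t =>
    (Real.exp (-(lam*s)) / (2*lam)) * (Real.exp (lam*t) - Real.exp (-(lam*t))) * Real.sin (γ*t) with hE1
  set E2 : ℝ → ℝ := fun t =>
    ((Real.exp (lam*s) - Real.exp (-(lam*s))) / (2*lam)) * (Real.exp (-(lam*t)) * Real.sin (γ*t)) with hE2
  -- antiderivatives
  set G1 : ℝ → ℝ := fun t =>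
    (Real.exp (-(lam*s)) / (2*lam*(lam^2+γ^2))) *
      (Real.exp (lam*t) * (lam * Real.sin (γ*t) - γ * Real.cos (γ*t))
        + Real.exp (-(lam*t)) * (lam * Real.sin (γ*t) + γ * Real.cos (γ*t))) with hG1def
  set G2 : ℝ → ℝ := fun t =>
    ((Real.exp (lam*s) - Real.exp (-(lam*s))) / (2*lam*(lam^2+γ^2))) *
      (-(Real.exp (-(lam*t)) * (lam * Real.sin (γ*t) + γ * Real.cos (γ*t)))) with hG2def
  have hG1 : ∀ t ∈ uIcc (0:ℝ) s, HasDerivAt G1 (E1 t) t := by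
    intro t _
    have := ((hd1 t).add (hd2 t)).const_mul (Real.exp (-(lam*s)) / (2*lam*(lam^2+γ^2)))
    refine this.congr_deriv ?_
    simp only [hE1]
    field_simp
    ring
  have hG2 : ∀ t ∈ uIcc s (1:ℝ), HasDerivAt G2 (E2 t) t := by
    intro t _
    have := ((hd2 t).neg).const_mul ((Real.exp (lam*s) - Real.exp (-(lam*s))) / (2*lam*(lam^2+γ^2)))
    refine this.congr_deriv ?_
    simp only [hE2]
    field_simp
  have hcE1 : Continuous E1 := by fun_prop
  have hcE2 : Continuous E2 := by fun_prop
  have hcf : Continuous fun t =>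
      (1 / (2 * lam)) * (Real.exp (-lam * |t - s|) - Real.exp (-lam * (t + s))) * Real.sin (γ * t) := by
    fun_prop
  -- split the integral
  rw [← intervalIntegral.integral_add_adjacent_intervals (a := (0:ℝ)) (b := s) (c := 1)
      (hcf.intervalIntegrable 0 s) (hcf.intervalIntegrable s 1)]
  have hcong1 : EqOn (fun t =>
      (1 / (2 * lam)) * (Real.exp (-lam * |t - s|) - Real.exp (-lam * (t + s))) * Real.sin (γ * t))
      E1 (uIcc (0:ℝ) s) := by
    intro t ht
    rw [uIcc_of_le hs0] at ht
    have habs : |t - s| = s - t := by rw [abs_of_nonpos (by linarith [ht.2])]; ring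
    simp only [hE1, habs]
    rw [show -lam * (s - t) = -(lam*s) + lam*t by ring,
        show -lam * (t + s) = -(lam*s) + -(lam*t) by ring,
        Real.exp_add, Real.exp_add]
    ring
  have hcong2 : EqOn (fun t =>
      (1 / (2 * lam)) * (Real.exp (-lam * |t - s|) - Real.exp (-lam * (t + s))) * Real.sin (γ * t))
      E2 (uIcc s (1:ℝ)) := by
    intro t ht
    rw [uIcc_of_le hs1] at ht
    have habs : |t - s| = t - s := abs_of_nonneg (by linarith [ht.1])
    simp only [hE2, habs]
    rw [show -lam * (t - s) = lam*s + -(lam*t) by ring,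
        show -lam * (t + s) = -(lam*s) + -(lam*t) by ring,
        Real.exp_add, Real.exp_add]
    ring
  rw [intervalIntegral.integral_congr hcong1, intervalIntegral.integral_congr hcong2,
      intervalIntegral.integral_eq_sub_of_hasDerivAt hG1 (hcE1.intervalIntegrable 0 s),
      intervalIntegral.integral_eq_sub_of_hasDerivAt hG2 (hcE2.intervalIntegrable s 1)]
  simp only [hG1def, hG2def, mul_zero, mul_one, Real.exp_zero, Real.sin_zero, Real.cos_zero, neg_zero]
  rw [hid]
  have hexp : Real.exp (-(lam*s)) = (Real.exp (lam*s))⁻¹ := Real.exp_neg _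
  rw [hexp]
  field_simp
  ring
end
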